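/- arXiv:1307.8403 — 3 statements merged into one kernel-verified Lean document; each statement's English description precedes it below -/
import Mathlib

section
/- Let X be the solution of the recursive distributional equation X =_d √U·X + √U·(1−√U), and let f be the version of its Lebesgue density satisfying the integral equation f(t) = 2·∫_{2√t−1}^{t} g(x,t)·f(x) dx + ∫_{t}^{1} (g(x,t) − 1)·f(x) dx for all t ∈ [0,1] and f = 0 outside [0,1], where g(x,t) := (1+x)/√((1+x)² − 4t). Then f(0) = 0, f(1) = 0, and f is strictly increasing on [0, 1/4]. -/
open MeasureTheory

noncomputable section

/-- The uniform distribution on `[0,1]`. -/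
def unif : Measure ℝ := volume.restrict (Set.Icc 0 1)

/-- The map `(x, u) ↦ √u·x + √u·(1 − √u)`. -/
def rdeMap (q : ℝ × ℝ) : ℝ :=
  Real.sqrt q.2 * q.1 + Real.sqrt q.2 * (1 - Real.sqrt q.2)

/-- `μ` is a (probability) solution of the recursive distributional equation
`X =_d √U·X + √U·(1 − √U)` with `X, U` independent and `U` uniform on `[0,1]`. -/
def IsRDESolution (μ : Measure ℝ) : Prop :=
  IsProbabilityMeasure μ ∧ Measure.map rdeMap (μ.prod unif) = μ

/-- The function `g(x,t) = (1+x)/√((1+x)² − 4t)`. -/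
def gdens (x t : ℝ) : ℝ := (1 + x) / Real.sqrt ((1 + x) ^ 2 - 4 * t)

/-- `f` is the version of the Lebesgue density of `μ` which vanishes outside `[0,1]` and
satisfies the integral equation
`f(t) = 2·∫_{2√t−1}^{t} g(x,t)·f(x) dx + ∫_{t}^{1} (g(x,t) − 1)·f(x) dx` on `[0,1]`. -/
def IsRDEDensity (μ : Measure ℝ) (f : ℝ → ℝ) : Prop :=
  Measurable f ∧ (∀ t, 0 ≤ f t) ∧
  μ = volume.withDensity (fun t => ENNReal.ofReal (f t)) ∧
  (∀ t : ℝ, t < 0 ∨ 1 < t → f t = 0) ∧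
  ∀ t ∈ Set.Icc (0 : ℝ) 1,
    f t = 2 * (∫ x in (2 * Real.sqrt t - 1)..t, gdens x t * f x)
          + ∫ x in t..(1 : ℝ), (gdens x t - 1) * f x

lemma gdens_meas (t : ℝ) : Measurable fun x => gdens x t := by
  unfold gdens; fun_prop

lemma gdens_nonneg {x t : ℝ} (hx : 0 ≤ x) : 0 ≤ gdens x t :=
  div_nonneg (by linarith) (Real.sqrt_nonneg _)

lemma gdens_mono {x s t : ℝ} (hx : 0 < x) (hst : s ≤ t) (ht : t ≤ 1/4) :
    gdens x s ≤ gdens x t := by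
  unfold gdens
  have hdt : 0 < (1+x)^2 - 4*t := by nlinarith
  have h1 : 0 < Real.sqrt ((1+x)^2 - 4*t) := Real.sqrt_pos.2 hdt
  exact div_le_div_of_nonneg_left (by linarith) h1 (Real.sqrt_le_sqrt (by linarith))

lemma gdens_strict {x s t : ℝ} (hx : 0 < x) (hst : s < t) (ht : t ≤ 1/4) :
    gdens x s < gdens x t := by
  unfold gdens
  have hdt : 0 < (1+x)^2 - 4*t := by nlinarith
  have h1 : 0 < Real.sqrt ((1+x)^2 - 4*t) := Real.sqrt_pos.2 hdt
  exact div_lt_div_of_pos_left (by linarith) h1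
    (Real.sqrt_lt_sqrt (by positivity) (by linarith))

lemma gdens_le_inv_sqrt {x t : ℝ} (hx : 0 < x) (hx1 : x ≤ 1) (ht : t ≤ 1/4) :
    gdens x t ≤ 2 / Real.sqrt x := by
  unfold gdens
  have hsx : 0 < Real.sqrt x := Real.sqrt_pos.2 hx
  exact div_le_div₀ (by norm_num) (by linarith) hsx (Real.sqrt_le_sqrt (by nlinarith))

lemma gdens_le_right {x t : ℝ} (htx : t ≤ x) (hx1 : x ≤ 1) (ht0 : 0 ≤ t) (ht : t ≤ 1/4) :
    gdens x t ≤ 8/3 := by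
  unfold gdens
  have h34 : (3/4 : ℝ) ≤ Real.sqrt ((1+x)^2 - 4*t) := by
    rw [show (3/4 : ℝ) = Real.sqrt ((3/4)^2) by rw [Real.sqrt_sq]; norm_num]
    exact Real.sqrt_le_sqrt (by nlinarith)
  calc (1+x) / Real.sqrt ((1+x)^2 - 4*t) ≤ 2 / (3/4) :=
        div_le_div₀ (by norm_num) (by linarith) (by norm_num) h34
    _ = 8/3 := by norm_num

lemma gdens_le_small {x t : ℝ} (hx : 0 ≤ x) (hxt : x ≤ 1/8) (ht : t ≤ 1/8) :
    gdens x t ≤ 2 := by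
  unfold gdens
  have h : (9/16 : ℝ) ≤ Real.sqrt ((1+x)^2 - 4*t) := by
    rw [show (9/16 : ℝ) = Real.sqrt ((9/16)^2) by rw [Real.sqrt_sq]; norm_num]
    exact Real.sqrt_le_sqrt (by nlinarith)
  calc (1+x) / Real.sqrt ((1+x)^2 - 4*t) ≤ (9/8) / (9/16) :=
        div_le_div₀ (by norm_num) (by linarith) (by norm_num) h
    _ = 2 := by norm_num


/-- The version `f` of the density of the RDE solution satisfying the integral equation
satisfies `f(0) = 0`, `f(1) = 0`, and is strictly increasing on `[0, 1/4]`. -/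
theorem rde_density_monotone (μ : Measure ℝ) (hμ : IsRDESolution μ)
    (f : ℝ → ℝ) (hf : IsRDEDensity μ f) :
    f 0 = 0 ∧ f 1 = 0 ∧ StrictMonoOn f (Set.Icc (0 : ℝ) (1 / 4)) := by
  obtain ⟨hprob, -⟩ := hμ
  obtain ⟨hfm, hfnn, hμf, hvan, heq⟩ := hf
  -- the total integral of f is 1
  have hlin : ∫⁻ x, ENNReal.ofReal (f x) = 1 := by
    have h := hprob.measure_univ
    rw [hμf, withDensity_apply _ MeasurableSet.univ, Measure.restrict_univ] at h
    exact h
  have hI : Integrable f := by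
    refine ⟨hfm.aestronglyMeasurable, ?_⟩
    rw [hasFiniteIntegral_iff_norm]
    have : ∀ x, ENNReal.ofReal ‖f x‖ = ENNReal.ofReal (f x) := fun x => by
      rw [Real.norm_eq_abs, abs_of_nonneg (hfnn x)]
    simp only [this, hlin]
    norm_num
  have hint : ∫ x, f x = 1 := by
    rw [integral_eq_lintegral_of_nonneg_ae (ae_of_all _ hfnn) hfm.aestronglyMeasurable, hlin]
    simp
  -- f 0 = 0
  have hf0 : f 0 = 0 := by
    have h := heq 0 (by constructor <;> norm_num)
    have e1 : ∫ x in (2 * Real.sqrt 0 - 1)..(0:ℝ), gdens x 0 * f x = 0 := by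
      rw [Real.sqrt_zero, intervalIntegral.integral_of_le (by norm_num : (2*(0:ℝ)-1) ≤ 0)]
      have hae : ∀ᵐ x : ℝ, x ∈ Set.Ioc (2*(0:ℝ)-1) 0 → gdens x 0 * f x = 0 := by
        have h0 : ∀ᵐ x : ℝ, x ≠ (0:ℝ) := by
          rw [ae_iff]
          simpa using (by simp : volume ({0} : Set ℝ) = 0)
        filter_upwards [h0] with x hx0 hx
        rw [hvan x (Or.inl (lt_of_le_of_ne hx.2 hx0)), mul_zero]
      rw [setIntegral_congr_ae measurableSet_Ioc hae]
      simp
    have e2 : ∫ x in (0:ℝ)..1, (gdens x 0 - 1) * f x = 0 := by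
      have heqon : Set.EqOn (fun x => (gdens x 0 - 1) * f x) (fun _ => (0:ℝ))
          (Set.uIcc (0:ℝ) 1) := by
        intro x hx
        rw [Set.uIcc_of_le (by norm_num : (0:ℝ) ≤ 1)] at hx
        have hx0 : (0:ℝ) ≤ x := hx.1
        have hg : gdens x 0 = 1 := by
          unfold gdens
          rw [mul_zero, sub_zero, Real.sqrt_sq (by linarith), div_self (by linarith)]
        simp [hg]
      rw [intervalIntegral.integral_congr heqon]
      simp
    rw [e1, e2] at h
    simpa using h
  -- f 1 = 0
  have hf1 : f 1 = 0 := by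
    have h := heq 1 ⟨by norm_num, le_refl 1⟩
    rw [Real.sqrt_one] at h
    norm_num [intervalIntegral.integral_same] at h
    exact h
  have hzero : ∀ x : ℝ, x ≤ 0 → f x = 0 := fun x hx =>
    hx.lt_or_eq.elim (fun h => hvan x (Or.inl h)) (fun h => h ▸ hf0)
  -- integrability of (g(·,t)-1)·f on (t,1]
  have hIocInt : ∀ t : ℝ, 0 ≤ t → t ≤ 1/4 →
      IntegrableOn (fun x => gdens x t * f x) (Set.Ioc t 1) := by
    intro t ht0 ht
    refine Integrable.mono' ((hI.const_mul (8/3)).restrict)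
      ((gdens_meas t).mul hfm).aestronglyMeasurable
      ((ae_restrict_iff' measurableSet_Ioc).2 (ae_of_all _ fun x hx => ?_))
    have hx0 : (0:ℝ) ≤ x := le_trans ht0 hx.1.le
    rw [Real.norm_eq_abs, abs_of_nonneg (mul_nonneg (gdens_nonneg hx0) (hfnn x))]
    exact mul_le_mul_of_nonneg_right (gdens_le_right hx.1.le hx.2 ht0 ht) (hfnn x)
  have hIntRight : ∀ t : ℝ, 0 ≤ t → t ≤ 1/4 →
      IntegrableOn (fun x => (gdens x t - 1) * f x) (Set.Ioc t 1) := by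
    intro t ht0 ht
    exact ((hIocInt t ht0 ht).sub hI.integrableOn).congr
      (ae_of_all _ fun x => by simp [Pi.sub_apply]; ring)
  -- integrability on (0,t] for small t
  have hIntSmall : ∀ t : ℝ, 0 ≤ t → t ≤ 1/8 →
      IntegrableOn (fun x => gdens x t * f x) (Set.Ioc 0 t) := by
    intro t ht0 ht
    refine Integrable.mono' ((hI.const_mul 2).restrict)
      ((gdens_meas t).mul hfm).aestronglyMeasurable
      ((ae_restrict_iff' measurableSet_Ioc).2 (ae_of_all _ fun x hx => ?_))
    rw [Real.norm_eq_abs, abs_of_nonneg (mul_nonneg (gdens_nonneg hx.1.le) (hfnn x))]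
    exact mul_le_mul_of_nonneg_right (gdens_le_small hx.1.le (hx.2.trans ht) ht) (hfnn x)
  -- the key identity, in set-integral form
  have key : ∀ t : ℝ, 0 ≤ t → t ≤ 1/4 →
      IntegrableOn (fun x => gdens x t * f x) (Set.Ioc 0 t) →
      f t = 2 * (∫ x in Set.Ioc 0 t, gdens x t * f x)
        + ∫ x in Set.Ioc t 1, (gdens x t - 1) * f x := by
    intro t ht0 ht hGint
    have h := heq t ⟨ht0, by linarith⟩
    have hst : Real.sqrt t ≤ 1/2 := by
      have h1 := Real.sqrt_le_sqrt (ht : t ≤ 1/4)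
      rwa [show Real.sqrt (1/4) = 1/2 by
        rw [show (1/4:ℝ) = (1/2)^2 by norm_num, Real.sqrt_sq (by norm_num)]] at h1
    have ha : 2 * Real.sqrt t - 1 ≤ 0 := by linarith
    have hzero_fun : ∀ x ∈ Set.uIcc (2 * Real.sqrt t - 1) 0, gdens x t * f x = 0 := by
      intro x hx
      rw [Set.uIcc_of_le ha] at hx
      rw [hzero x hx.2, mul_zero]
    have hii1 : IntervalIntegrable (fun x => gdens x t * f x) volume (2 * Real.sqrt t - 1) 0 := by
      rw [intervalIntegrable_iff]
      rw [integrableOn_congr_fun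
        (fun x hx => hzero_fun x (Set.uIoc_subset_uIcc hx)) measurableSet_uIoc]
      exact integrableOn_zero
    have hii2 : IntervalIntegrable (fun x => gdens x t * f x) volume 0 t := by
      rw [intervalIntegrable_iff, Set.uIoc_of_le ht0]
      exact hGint
    have hadd := intervalIntegral.integral_add_adjacent_intervals hii1 hii2
    have hz : ∫ x in (2 * Real.sqrt t - 1)..(0:ℝ), gdens x t * f x = 0 := by
      rw [intervalIntegral.integral_congr hzero_fun]
      simp
    rw [h, ← hadd, hz, zero_add, intervalIntegral.integral_of_le ht0,
      intervalIntegral.integral_of_le (by linarith : t ≤ (1:ℝ))]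
  -- f is bounded by 7 on [0,1/8]
  have hbound : ∀ x : ℝ, x ∈ Set.Icc (0:ℝ) (1/8) → f x ≤ 7 := by
    intro t ht
    obtain ⟨ht0, ht8⟩ := ht
    have ht4 : t ≤ 1/4 := by linarith
    have hGi := hIntSmall t ht0 ht8
    have hk := key t ht0 ht4 hGi
    have hIoc1 : ∫ x in Set.Ioc (0:ℝ) t, f x ≤ 1 := by
      have := setIntegral_le_integral hI (ae_of_all _ hfnn) (s := Set.Ioc (0:ℝ) t)
      linarith [hint ▸ this]
    have hIoc2 : ∫ x in Set.Ioc t (1:ℝ), f x ≤ 1 := by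
      have := setIntegral_le_integral hI (ae_of_all _ hfnn) (s := Set.Ioc t (1:ℝ))
      linarith [hint ▸ this]
    have h1 : ∫ x in Set.Ioc (0:ℝ) t, gdens x t * f x ≤ ∫ x in Set.Ioc (0:ℝ) t, 2 * f x := by
      refine setIntegral_mono_on hGi ((hI.const_mul 2).integrableOn) measurableSet_Ioc ?_
      intro x hx
      exact mul_le_mul_of_nonneg_right (gdens_le_small hx.1.le (hx.2.trans ht8) ht8) (hfnn x)
    have h2 : ∫ x in Set.Ioc t (1:ℝ), (gdens x t - 1) * f x
        ≤ ∫ x in Set.Ioc t (1:ℝ), 2 * f x := by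
      refine setIntegral_mono_on (hIntRight t ht0 ht4) ((hI.const_mul 2).integrableOn)
        measurableSet_Ioc ?_
      intro x hx
      have hg := gdens_le_right hx.1.le hx.2 ht0 ht4
      nlinarith [hfnn x]
    rw [integral_const_mul] at h1 h2
    linarith [hk, h1, h2, hIoc1, hIoc2]
  -- master integrability on (0,1]
  have hMaster : ∀ t : ℝ, 0 ≤ t → t ≤ 1/4 →
      IntegrableOn (fun x => gdens x t * f x) (Set.Ioc 0 1) := by
    intro t ht0 ht
    have hA : IntegrableOn (fun x => gdens x t * f x) (Set.Ioc 0 (1/8)) := by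
      have hdom : IntegrableOn (fun x : ℝ => 14 / Real.sqrt x) (Set.Ioc 0 (1/8)) := by
        have h1 : IntervalIntegrable (fun x : ℝ => x ^ (-(1/2) : ℝ)) volume 0 (1/8) :=
          intervalIntegral.intervalIntegrable_rpow' (by norm_num)
        rw [intervalIntegrable_iff, Set.uIoc_of_le (by norm_num : (0:ℝ) ≤ 1/8)] at h1
        refine (h1.const_mul 14).congr
          ((ae_restrict_iff' measurableSet_Ioc).2 (ae_of_all _ fun x hx => ?_))
        show (14:ℝ) * x ^ (-(1/2) : ℝ) = 14 / Real.sqrt x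
        rw [Real.rpow_neg hx.1.le, ← Real.sqrt_eq_rpow, div_eq_mul_inv]
      refine Integrable.mono' hdom ((gdens_meas t).mul hfm).aestronglyMeasurable
        ((ae_restrict_iff' measurableSet_Ioc).2 (ae_of_all _ fun x hx => ?_))
      rw [Real.norm_eq_abs, abs_of_nonneg (mul_nonneg (gdens_nonneg hx.1.le) (hfnn x))]
      have hgle := gdens_le_inv_sqrt hx.1 (by linarith [hx.2] : x ≤ 1) ht
      have hfle := hbound x ⟨hx.1.le, hx.2⟩
      have hsx : 0 < Real.sqrt x := Real.sqrt_pos.2 hx.1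
      calc gdens x t * f x ≤ (2 / Real.sqrt x) * 7 :=
            mul_le_mul hgle hfle (hfnn x) (by positivity)
        _ = 14 / Real.sqrt x := by ring
    have hB : IntegrableOn (fun x => gdens x t * f x) (Set.Ioc (1/8) 1) := by
      refine Integrable.mono' ((hI.const_mul 6).restrict)
        ((gdens_meas t).mul hfm).aestronglyMeasurable
        ((ae_restrict_iff' measurableSet_Ioc).2 (ae_of_all _ fun x hx => ?_))
      have hx0 : (0:ℝ) < x := lt_trans (by norm_num) hx.1
      rw [Real.norm_eq_abs, abs_of_nonneg (mul_nonneg (gdens_nonneg hx0.le) (hfnn x))]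
      have hgle := gdens_le_inv_sqrt hx0 hx.2 ht
      have h3 : (1/3 : ℝ) ≤ Real.sqrt x := by
        rw [show (1/3:ℝ) = Real.sqrt ((1/3)^2) by rw [Real.sqrt_sq]; norm_num]
        exact Real.sqrt_le_sqrt (by nlinarith [hx.1])
      have hsx : 0 < Real.sqrt x := Real.sqrt_pos.2 hx0
      have : 2 / Real.sqrt x ≤ 6 := by
        rw [div_le_iff₀ hsx]; nlinarith
      exact mul_le_mul_of_nonneg_right (le_trans hgle this) (hfnn x)
    have hu : Set.Ioc (0:ℝ) 1 = Set.Ioc 0 (1/8) ∪ Set.Ioc (1/8) 1 :=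
      (Set.Ioc_union_Ioc_eq_Ioc (by norm_num) (by norm_num)).symm
    rw [hu]
    exact hA.union hB
  refine ⟨hf0, hf1, ?_⟩
  intro s hs t ht hst
  obtain ⟨hs0, hs4⟩ := hs
  obtain ⟨ht0', ht4⟩ := ht
  have ht0 : (0:ℝ) ≤ t := ht0'
  have ht1 : t ≤ (1:ℝ) := by linarith
  have hs1 : s ≤ (1:ℝ) := by linarith
  by_contra hcon
  push_neg at hcon
  -- integrabilities
  have hGtI := hMaster t ht0 ht4
  have hGsI := hMaster s hs0 (hst.le.trans ht4)
  have hGt0t : IntegrableOn (fun x => gdens x t * f x) (Set.Ioc 0 t) :=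
    hGtI.mono_set (Set.Ioc_subset_Ioc_right ht1)
  have hGs0s : IntegrableOn (fun x => gdens x s * f x) (Set.Ioc 0 s) :=
    hGsI.mono_set (Set.Ioc_subset_Ioc_right hs1)
  have hGt0s : IntegrableOn (fun x => gdens x t * f x) (Set.Ioc 0 s) :=
    hGtI.mono_set (Set.Ioc_subset_Ioc_right hs1)
  have hGtst : IntegrableOn (fun x => gdens x t * f x) (Set.Ioc s t) :=
    hGtI.mono_set (Set.Ioc_subset_Ioc hs0 ht1)
  have hGsst : IntegrableOn (fun x => gdens x s * f x) (Set.Ioc s t) :=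
    hGsI.mono_set (Set.Ioc_subset_Ioc hs0 ht1)
  have hGst1 : IntegrableOn (fun x => gdens x s * f x) (Set.Ioc t 1) :=
    hGsI.mono_set (Set.Ioc_subset_Ioc_left ht0)
  have hGtt1 : IntegrableOn (fun x => gdens x t * f x) (Set.Ioc t 1) :=
    hGtI.mono_set (Set.Ioc_subset_Ioc_left ht0)
  have hRs : IntegrableOn (fun x => (gdens x s - 1) * f x) (Set.Ioc s 1) :=
    hIntRight s hs0 (hst.le.trans ht4)
  have hRsst : IntegrableOn (fun x => (gdens x s - 1) * f x) (Set.Ioc s t) :=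
    hRs.mono_set (Set.Ioc_subset_Ioc_right ht1)
  have hRst1 : IntegrableOn (fun x => (gdens x s - 1) * f x) (Set.Ioc t 1) :=
    hRs.mono_set (Set.Ioc_subset_Ioc_left hst.le)
  have hRt : IntegrableOn (fun x => (gdens x t - 1) * f x) (Set.Ioc t 1) :=
    hIntRight t ht0 ht4
  -- the two key identities
  have hkt := key t ht0 ht4 hGt0t
  have hks := key s hs0 (hst.le.trans ht4) (hGsI.mono_set (Set.Ioc_subset_Ioc_right hs1))
  -- splittings
  have hsplit1 : ∫ x in Set.Ioc (0:ℝ) t, gdens x t * f x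
      = (∫ x in Set.Ioc (0:ℝ) s, gdens x t * f x) + ∫ x in Set.Ioc s t, gdens x t * f x := by
    rw [← Set.Ioc_union_Ioc_eq_Ioc hs0 hst.le]
    exact setIntegral_union (Set.Ioc_disjoint_Ioc_of_le le_rfl) measurableSet_Ioc hGt0s hGtst
  have hsplit2 : ∫ x in Set.Ioc s (1:ℝ), (gdens x s - 1) * f x
      = (∫ x in Set.Ioc s t, (gdens x s - 1) * f x)
        + ∫ x in Set.Ioc t 1, (gdens x s - 1) * f x := by
    rw [← Set.Ioc_union_Ioc_eq_Ioc hst.le ht1]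
    exact setIntegral_union (Set.Ioc_disjoint_Ioc_of_le le_rfl) measurableSet_Ioc hRsst hRst1
  -- the three difference terms
  have hD1 : (∫ x in Set.Ioc (0:ℝ) s, gdens x t * f x)
      - ∫ x in Set.Ioc (0:ℝ) s, gdens x s * f x
      = ∫ x in Set.Ioc (0:ℝ) s, (gdens x t - gdens x s) * f x := by
    rw [← integral_sub hGt0s hGs0s]
    exact integral_congr_ae (ae_of_all _ fun x => by ring)
  have hT2int : IntegrableOn (fun x => (2 * gdens x t - gdens x s + 1) * f x)
      (Set.Ioc s t) := by
    refine (((hGtst.const_mul 2).sub hGsst).add hI.integrableOn).congr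
      (ae_of_all _ fun x => by simp [Pi.sub_apply, Pi.add_apply]; ring)
  have hD2 : 2 * (∫ x in Set.Ioc s t, gdens x t * f x)
      - ∫ x in Set.Ioc s t, (gdens x s - 1) * f x
      = ∫ x in Set.Ioc s t, (2 * gdens x t - gdens x s + 1) * f x := by
    rw [← integral_const_mul, ← integral_sub (hGtst.const_mul 2) hRsst]
    exact integral_congr_ae (ae_of_all _ fun x => by ring)
  have hD3 : (∫ x in Set.Ioc t (1:ℝ), (gdens x t - 1) * f x)
      - ∫ x in Set.Ioc t 1, (gdens x s - 1) * f x
      = ∫ x in Set.Ioc t (1:ℝ), (gdens x t - gdens x s) * f x := by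
    rw [← integral_sub hRt hRst1]
    exact integral_congr_ae (ae_of_all _ fun x => by ring)
  -- nonnegativity
  have hT1nn : 0 ≤ ∫ x in Set.Ioc (0:ℝ) s, (gdens x t - gdens x s) * f x := by
    refine setIntegral_nonneg measurableSet_Ioc fun x hx => ?_
    exact mul_nonneg (sub_nonneg.2 (gdens_mono hx.1 hst.le ht4)) (hfnn x)
  have hT3nn : 0 ≤ ∫ x in Set.Ioc t (1:ℝ), (gdens x t - gdens x s) * f x := by
    refine setIntegral_nonneg measurableSet_Ioc fun x hx => ?_
    have hx0 : 0 < x := lt_of_le_of_lt ht0 hx.1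
    exact mul_nonneg (sub_nonneg.2 (gdens_mono hx0 hst.le ht4)) (hfnn x)
  have hJnn : 0 ≤ ∫ x in Set.Ioc s t, f x :=
    setIntegral_nonneg measurableSet_Ioc fun x _ => hfnn x
  have hT2ge : (∫ x in Set.Ioc s t, f x)
      ≤ ∫ x in Set.Ioc s t, (2 * gdens x t - gdens x s + 1) * f x := by
    refine setIntegral_mono_on hI.integrableOn hT2int measurableSet_Ioc fun x hx => ?_
    have hx0 : 0 < x := lt_of_le_of_lt hs0 hx.1
    have h1 := gdens_mono hx0 hst.le ht4
    have h2 := gdens_nonneg (t := t) hx0.le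
    nlinarith [hfnn x]
  -- main identity
  have hTid : f t - f s
      = 2 * (∫ x in Set.Ioc (0:ℝ) s, (gdens x t - gdens x s) * f x)
        + (∫ x in Set.Ioc s t, (2 * gdens x t - gdens x s + 1) * f x)
        + ∫ x in Set.Ioc t (1:ℝ), (gdens x t - gdens x s) * f x := by
    rw [hkt, hks, hsplit1, hsplit2]
    linarith [hD1, hD2, hD3]
  -- all three terms vanish
  have hT1z : ∫ x in Set.Ioc (0:ℝ) s, (gdens x t - gdens x s) * f x = 0 := by
    linarith [hTid, hT1nn, hT3nn, hT2ge, hJnn, hcon]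
  have hT3z : ∫ x in Set.Ioc t (1:ℝ), (gdens x t - gdens x s) * f x = 0 := by
    linarith [hTid, hT1nn, hT3nn, hT2ge, hJnn, hcon]
  have hJz : ∫ x in Set.Ioc s t, f x = 0 := by
    linarith [hTid, hT1nn, hT3nn, hT2ge, hJnn, hcon]
  -- derive f = 0 a.e. on the three pieces
  have hz1 : ∀ᵐ x : ℝ, x ∈ Set.Ioc (0:ℝ) s → f x = 0 := by
    have hnn : 0 ≤ᵐ[volume.restrict (Set.Ioc (0:ℝ) s)]
        fun x => (gdens x t - gdens x s) * f x :=
      (ae_restrict_iff' measurableSet_Ioc).2 (ae_of_all _ fun x hx =>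
        mul_nonneg (sub_nonneg.2 (gdens_mono hx.1 hst.le ht4)) (hfnn x))
    have hint' : IntegrableOn (fun x => (gdens x t - gdens x s) * f x) (Set.Ioc (0:ℝ) s) :=
      (hGt0s.sub hGs0s).congr (ae_of_all _ fun x => by simp [Pi.sub_apply]; ring)
    have := (setIntegral_eq_zero_iff_of_nonneg_ae hnn hint').1 hT1z
    rw [Filter.EventuallyEq, ae_restrict_iff' measurableSet_Ioc] at this
    filter_upwards [this] with x hx hxs
    have h := hx hxs
    have hgt := gdens_strict hxs.1 hst ht4
    have : (gdens x t - gdens x s) * f x = 0 := h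
    rcases mul_eq_zero.1 this with h'|h'
    · linarith
    · exact h'
  have hz3 : ∀ᵐ x : ℝ, x ∈ Set.Ioc t (1:ℝ) → f x = 0 := by
    have hnn : 0 ≤ᵐ[volume.restrict (Set.Ioc t (1:ℝ))]
        fun x => (gdens x t - gdens x s) * f x :=
      (ae_restrict_iff' measurableSet_Ioc).2 (ae_of_all _ fun x hx =>
        mul_nonneg (sub_nonneg.2 (gdens_mono (lt_of_le_of_lt ht0 hx.1) hst.le ht4)) (hfnn x))
    have hint' : IntegrableOn (fun x => (gdens x t - gdens x s) * f x) (Set.Ioc t (1:ℝ)) :=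
      (hGtt1.sub hGst1).congr (ae_of_all _ fun x => by simp [Pi.sub_apply]; ring)
    have := (setIntegral_eq_zero_iff_of_nonneg_ae hnn hint').1 hT3z
    rw [Filter.EventuallyEq, ae_restrict_iff' measurableSet_Ioc] at this
    filter_upwards [this] with x hx hxs
    have h := hx hxs
    have hx0 : 0 < x := lt_of_le_of_lt ht0 hxs.1
    have hgt := gdens_strict hx0 hst ht4
    have : (gdens x t - gdens x s) * f x = 0 := h
    rcases mul_eq_zero.1 this with h'|h'
    · linarith
    · exact h'
  have hz2 : ∀ᵐ x : ℝ, x ∈ Set.Ioc s t → f x = 0 := by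
    have hnn : 0 ≤ᵐ[volume.restrict (Set.Ioc s t)] f :=
      (ae_restrict_iff' measurableSet_Ioc).2 (ae_of_all _ fun x _ => hfnn x)
    have := (setIntegral_eq_zero_iff_of_nonneg_ae hnn hI.integrableOn).1 hJz
    rw [Filter.EventuallyEq, ae_restrict_iff' measurableSet_Ioc] at this
    filter_upwards [this] with x hx hxs
    exact hx hxs
  -- conclude f = 0 a.e., contradicting ∫ f = 1
  have hzae : ∀ᵐ x : ℝ, f x = 0 := by
    filter_upwards [hz1, hz2, hz3] with x h1 h2 h3
    rcases le_or_gt x 0 with h|h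
    · exact hzero x h
    rcases le_or_gt x s with h'|h'
    · exact h1 ⟨h, h'⟩
    rcases le_or_gt x t with h''|h''
    · exact h2 ⟨h', h''⟩
    rcases le_or_gt x 1 with h'''|h'''
    · exact h3 ⟨h'', h'''⟩
    · exact hvan x (Or.inr h''')
  have : (1:ℝ) = 0 := by
    rw [← hint]
    exact integral_eq_zero_of_ae hzae
  norm_num at this
end
end

section
/- Let X be the solution of the recursive distributional equation X =_d √U·X + √U·(1−√U), and let f be the version of its Lebesgue density satisfying the integral equation f(t) = 2·∫_{2√t−1}^{t} g(x,t)·f(x) dx + ∫_{t}^{1} (g(x,t) − 1)·f(x) dx for all t ∈ [0,1] and f = 0 outside [0,1], where g(x,t) := (1+x)/√((1+x)² − 4t). Then f(t) → 0 as t ↓ 0, and f has a right derivative at 0 given by lim_{t ↓ 0} f(t)/t = E[2/(1+X)²]; since f vanishes on (−∞, 0), f is not differentiable at 0. -/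
open MeasureTheory

noncomputable section

namespace RDEAux

open Filter Set

lemma gdens_meas (t : ℝ) : Measurable fun x : ℝ => gdens x t := by
  unfold gdens; fun_prop

lemma gdens_bounds {x t : ℝ} (hx0 : 0 ≤ x) (hx1 : x ≤ 1) (ht0 : 0 ≤ t) (ht : t ≤ 1/12) :
    1 ≤ gdens x t ∧ gdens x t ≤ 3 ∧ gdens x t - 1 ≤ 6*t := by
  unfold gdens
  set s := Real.sqrt ((1+x)^2 - 4*t) with hs
  have hD : (2:ℝ)/3 ≤ (1+x)^2 - 4*t := by nlinarith
  have hs0 : 0 < s := Real.sqrt_pos.mpr (by linarith)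
  have hs2 : s^2 = (1+x)^2 - 4*t := Real.sq_sqrt (by linarith)
  have hsge : 2/3 ≤ s := by nlinarith
  have hsle : s ≤ 1 + x := by nlinarith
  refine ⟨(one_le_div hs0).mpr hsle, ?_, ?_⟩
  · rw [div_le_iff₀ hs0]; linarith
  · have h1 : (1+x) - s ≤ 4*t := by nlinarith
    have : (1+x)/s ≤ 1 + 6*t := by rw [div_le_iff₀ hs0]; nlinarith

    linarith

lemma ae_ne_zero : ∀ᵐ x : ℝ, x ≠ 0 := by
  rw [ae_iff]
  simp only [not_not, Set.setOf_eq_eq_singleton]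
  exact measure_singleton 0

section

variable {μ : Measure ℝ} {f : ℝ → ℝ}

/-- bounded-by-multiple-of-f functions are interval integrable -/
lemma II (hmeas : Measurable f) (hint : Integrable f volume)
    {h : ℝ → ℝ} (hh : Measurable h) {a b C : ℝ}
    (hb : ∀ x ∈ Set.uIoc a b, |h x| ≤ C * f x) :
    IntervalIntegrable h volume a b := by
  rw [intervalIntegrable_iff]
  refine Integrable.mono' ((hint.const_mul C).integrableOn) hh.aestronglyMeasurable ?_
  rw [ae_restrict_iff' measurableSet_uIoc]
  exact Filter.Eventually.of_forall fun x hx => by simpa [Real.norm_eq_abs] using hb x hx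

variable (hmeas : Measurable f) (hpos : ∀ t, 0 ≤ f t)
  (hzero : ∀ t : ℝ, t < 0 ∨ 1 < t → f t = 0)
  (hint : Integrable f volume)

include hmeas hpos hzero hint in
/-- the first integral with lower limit `2√t−1` equals the one with lower limit `0`. -/
lemma first_eq {t : ℝ} (ht0 : 0 < t) (ht : t ≤ 1/12) :
    (∫ x in (2 * Real.sqrt t - 1)..t, gdens x t * f x)
      = ∫ x in (0:ℝ)..t, gdens x t * f x := by
  have hsq : Real.sqrt t ≤ 1/2 := by
    rw [show (1:ℝ)/2 = Real.sqrt (1/4) by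
      rw [show (1:ℝ)/4 = (1/2)^2 by norm_num, Real.sqrt_sq]; norm_num]
    exact Real.sqrt_le_sqrt (by linarith)
  have hlow : 2 * Real.sqrt t - 1 ≤ 0 := by linarith
  have hI1 : IntervalIntegrable (fun x => gdens x t * f x) volume (2 * Real.sqrt t - 1) 0 := by
    refine II hmeas hint ((gdens_meas t).mul hmeas) (C := 3) fun x hx => ?_
    rw [Set.uIoc_of_le hlow] at hx
    rcases lt_or_eq_of_le hx.2 with hx' | hx'
    · simp only [Pi.mul_apply]; rw [hzero x (Or.inl hx'), mul_zero, abs_zero, mul_zero]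
    · subst hx'
      obtain ⟨hg1, hg3, -⟩ := gdens_bounds le_rfl zero_le_one ht0.le ht
      simp only [Pi.mul_apply]; rw [abs_of_nonneg (mul_nonneg (by linarith) (hpos 0))]
      exact mul_le_mul_of_nonneg_right hg3 (hpos 0)
  have hI2 : IntervalIntegrable (fun x => gdens x t * f x) volume 0 t := by
    refine II hmeas hint ((gdens_meas t).mul hmeas) (C := 3) fun x hx => ?_
    rw [Set.uIoc_of_le ht0.le] at hx
    obtain ⟨hg1, hg3, -⟩ := gdens_bounds hx.1.le (by linarith [hx.2]) ht0.le ht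
    simp only [Pi.mul_apply]; rw [abs_of_nonneg (mul_nonneg (by linarith) (hpos x))]
    exact mul_le_mul_of_nonneg_right hg3 (hpos x)
  have hz : (∫ x in (2 * Real.sqrt t - 1)..0, gdens x t * f x) = 0 := by
    rw [intervalIntegral.integral_congr_ae (g := fun _ => (0:ℝ)) ?_, intervalIntegral.integral_zero]
    · filter_upwards [ae_ne_zero] with x hx0 hx
      rw [Set.uIoc_of_le hlow] at hx
      rw [hzero x (Or.inl (lt_of_le_of_ne hx.2 hx0)), mul_zero]
  rw [← intervalIntegral.integral_add_adjacent_intervals hI1 hI2, hz, zero_add]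

include hmeas hpos hzero in
lemma f_zero (heq : ∀ t ∈ Set.Icc (0 : ℝ) 1,
    f t = 2 * (∫ x in (2 * Real.sqrt t - 1)..t, gdens x t * f x)
          + ∫ x in t..(1 : ℝ), (gdens x t - 1) * f x) : f 0 = 0 := by
  have h := heq 0 ⟨le_rfl, zero_le_one⟩
  rw [Real.sqrt_zero] at h
  have h1 : (∫ x in (2*0 - 1 : ℝ)..0, gdens x 0 * f x) = 0 := by
    rw [intervalIntegral.integral_congr_ae (g := fun _ => (0:ℝ)) ?_, intervalIntegral.integral_zero]
    · filter_upwards [ae_ne_zero] with x hx0 hx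
      rw [Set.uIoc_of_le (by norm_num : (2*0 - 1:ℝ) ≤ 0)] at hx
      rw [hzero x (Or.inl (lt_of_le_of_ne hx.2 hx0)), mul_zero]
  have h2 : (∫ x in (0:ℝ)..1, (gdens x 0 - 1) * f x) = 0 := by
    rw [intervalIntegral.integral_congr (g := fun _ => (0:ℝ)) ?_, intervalIntegral.integral_zero]
    intro x hx
    rw [Set.uIcc_of_le zero_le_one] at hx
    have hx0 : (0:ℝ) < 1 + x := by linarith [hx.1]
    have : gdens x 0 = 1 := by
      unfold gdens
      rw [mul_zero, sub_zero, Real.sqrt_sq hx0.le, div_self hx0.ne']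
    simp [this]
  rw [h1, h2] at h
  simpa using h

include hmeas hpos hzero hint in
lemma key_eq (heq : ∀ t ∈ Set.Icc (0 : ℝ) 1,
      f t = 2 * (∫ x in (2 * Real.sqrt t - 1)..t, gdens x t * f x)
            + ∫ x in t..(1 : ℝ), (gdens x t - 1) * f x)
    {t : ℝ} (ht0 : 0 < t) (ht : t ≤ 1/12) :
    f t = 2 * (∫ x in (0:ℝ)..t, gdens x t * f x)
          + ∫ x in t..(1 : ℝ), (gdens x t - 1) * f x := by
  rw [← first_eq hmeas hpos hzero hint ht0 ht]
  exact heq t ⟨ht0.le, by linarith⟩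

include hmeas hpos hint in
lemma first_bound {t : ℝ} (ht0 : 0 < t) (ht : t ≤ 1/12) :
    (0 ≤ ∫ x in (0:ℝ)..t, gdens x t * f x) ∧
    (∫ x in (0:ℝ)..t, gdens x t * f x) ≤ 3 * ∫ x in (0:ℝ)..t, f x := by
  have hI : IntervalIntegrable (fun x => gdens x t * f x) volume 0 t := by
    refine II hmeas hint ((gdens_meas t).mul hmeas) (C := 3) fun x hx => ?_
    rw [Set.uIoc_of_le ht0.le] at hx
    obtain ⟨hg1, hg3, -⟩ := gdens_bounds hx.1.le (by linarith [hx.2]) ht0.le ht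
    simp only [Pi.mul_apply]; rw [abs_of_nonneg (mul_nonneg (by linarith) (hpos x))]
    exact mul_le_mul_of_nonneg_right hg3 (hpos x)
  constructor
  · refine intervalIntegral.integral_nonneg ht0.le fun x hx => ?_
    obtain ⟨hg1, -, -⟩ := gdens_bounds hx.1 (by linarith [hx.2]) ht0.le ht
    exact mul_nonneg (by linarith) (hpos x)
  · rw [← intervalIntegral.integral_const_mul]
    refine intervalIntegral.integral_mono_on ht0.le hI
      ((hint.intervalIntegrable).const_mul 3) fun x hx => ?_
    obtain ⟨hg1, hg3, -⟩ := gdens_bounds hx.1 (by linarith [hx.2]) ht0.le ht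
    exact mul_le_mul_of_nonneg_right hg3 (hpos x)

include hmeas hpos hzero hint in
lemma second_bound (htot : ∫ x, f x = 1) {t : ℝ} (ht0 : 0 < t) (ht : t ≤ 1/12) :
    (∫ x in t..(1:ℝ), (gdens x t - 1) * f x) ≤ 6 * t := by
  have ht1 : t ≤ 1 := by linarith
  have hI : IntervalIntegrable (fun x => (gdens x t - 1) * f x) volume t 1 := by
    refine II hmeas hint (((gdens_meas t).sub measurable_const).mul hmeas) (C := 1) fun x hx => ?_
    rw [Set.uIoc_of_le ht1] at hx
    obtain ⟨hg1, -, hg6⟩ := gdens_bounds (by linarith [hx.1]) hx.2 ht0.le ht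
    simp only [Pi.mul_apply, Pi.sub_apply]; rw [abs_of_nonneg (mul_nonneg (by linarith) (hpos x)), one_mul]
    calc (gdens x t - 1) * f x ≤ (6*t) * f x :=
        mul_le_mul_of_nonneg_right hg6 (hpos x)
      _ ≤ 1 * f x := mul_le_mul_of_nonneg_right (by linarith) (hpos x)
      _ = f x := one_mul _
  calc (∫ x in t..(1:ℝ), (gdens x t - 1) * f x)
      ≤ ∫ x in t..(1:ℝ), (6*t) * f x := by
        refine intervalIntegral.integral_mono_on ht1 hI
          ((hint.intervalIntegrable).const_mul _) fun x hx => ?_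
        obtain ⟨hg1, -, hg6⟩ := gdens_bounds (by linarith [hx.1]) hx.2 ht0.le ht
        exact mul_le_mul_of_nonneg_right hg6 (hpos x)
    _ = (6*t) * ∫ x in t..(1:ℝ), f x := intervalIntegral.integral_const_mul _ _
    _ ≤ (6*t) * 1 := by
        refine mul_le_mul_of_nonneg_left ?_ (by linarith)
        rw [intervalIntegral.integral_of_le ht1, ← htot]
        exact setIntegral_le_integral hint (Filter.Eventually.of_forall hpos)
    _ = 6 * t := by ring

include hpos hint in
lemma F_mono {s t : ℝ} (hs0 : 0 ≤ s) (hst : s ≤ t) :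
    (∫ x in (0:ℝ)..s, f x) ≤ ∫ x in (0:ℝ)..t, f x := by
  rw [← intervalIntegral.integral_add_adjacent_intervals
    (hint.intervalIntegrable (a:=0) (b:=s)) (hint.intervalIntegrable (a:=s) (b:=t))]
  have : 0 ≤ ∫ x in s..t, f x :=
    intervalIntegral.integral_nonneg hst fun x _ => hpos x
  linarith

include hmeas hpos hzero hint in
lemma f_le_lin (htot : ∫ x, f x = 1)
    (heq : ∀ t ∈ Set.Icc (0 : ℝ) 1,
      f t = 2 * (∫ x in (2 * Real.sqrt t - 1)..t, gdens x t * f x)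
            + ∫ x in t..(1 : ℝ), (gdens x t - 1) * f x)
    {t : ℝ} (ht0 : 0 < t) (ht : t ≤ 1/12) :
    f t ≤ 6 * (∫ x in (0:ℝ)..t, f x) + 6 * t := by
  rw [key_eq hmeas hpos hzero hint heq ht0 ht]
  have h1 := (first_bound hmeas hpos hint ht0 ht).2
  have h2 := second_bound hmeas hpos hzero hint htot ht0 ht
  linarith

include hmeas hpos hzero hint in
lemma F_le (htot : ∫ x, f x = 1)
    (heq : ∀ t ∈ Set.Icc (0 : ℝ) 1,
      f t = 2 * (∫ x in (2 * Real.sqrt t - 1)..t, gdens x t * f x)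
            + ∫ x in t..(1 : ℝ), (gdens x t - 1) * f x)
    {t : ℝ} (ht0 : 0 < t) (ht : t ≤ 1/12) :
    (∫ x in (0:ℝ)..t, f x) ≤ 12 * t^2 := by
  set F := ∫ x in (0:ℝ)..t, f x with hF
  have hF0 : 0 ≤ F := intervalIntegral.integral_nonneg ht0.le fun x _ => hpos x
  have hbd : ∀ s ∈ Set.Icc (0:ℝ) t, f s ≤ 6 * F + 6 * t := by
    intro s hs
    rcases eq_or_lt_of_le hs.1 with hs0 | hs0
    · rw [← hs0, f_zero hmeas hpos hzero heq]
      positivity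
    · calc f s ≤ 6 * (∫ x in (0:ℝ)..s, f x) + 6 * s :=
          f_le_lin hmeas hpos hzero hint htot heq hs0 (by linarith [hs.2])
        _ ≤ 6 * F + 6 * t := by
          have := F_mono hpos hint hs0.le hs.2
          have h6 : (6:ℝ) > 0 := by norm_num
          nlinarith [hs.2]
  have hstep : F ≤ t * (6 * F + 6 * t) := by
    calc F ≤ ∫ _x in (0:ℝ)..t, (6 * F + 6 * t) :=
        intervalIntegral.integral_mono_on ht0.le (hint.intervalIntegrable)
          intervalIntegrable_const hbd
      _ = t * (6 * F + 6 * t) := by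
        rw [intervalIntegral.integral_const, smul_eq_mul, sub_zero]
  nlinarith [mul_nonneg hF0 (by linarith : (0:ℝ) ≤ 1/2 - 6*t)]

include hmeas hpos hzero hint in
lemma f_le (htot : ∫ x, f x = 1)
    (heq : ∀ t ∈ Set.Icc (0 : ℝ) 1,
      f t = 2 * (∫ x in (2 * Real.sqrt t - 1)..t, gdens x t * f x)
            + ∫ x in t..(1 : ℝ), (gdens x t - 1) * f x)
    {t : ℝ} (ht0 : 0 < t) (ht : t ≤ 1/12) : f t ≤ 12 * t := by
  have h1 := f_le_lin hmeas hpos hzero hint htot heq ht0 ht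
  have h2 := F_le hmeas hpos hzero hint htot heq ht0 ht
  nlinarith

end

end RDEAux

namespace RDEAux

open Filter Set

/-- The family of integrands for dominated convergence. -/
def Ffun (f : ℝ → ℝ) (t x : ℝ) : ℝ :=
  Set.indicator (Set.Ioc t 1) (fun x => (gdens x t - 1) * f x / t) x

/-- The limit integrand. -/
def Lfun (f : ℝ → ℝ) (x : ℝ) : ℝ :=
  Set.indicator (Set.Ioc 0 1) (fun x => 2/(1+x)^2 * f x) x

section

variable {μ : Measure ℝ} {f : ℝ → ℝ}
  (hmeas : Measurable f) (hpos : ∀ t, 0 ≤ f t)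
  (hzero : ∀ t : ℝ, t < 0 ∨ 1 < t → f t = 0)
  (hint : Integrable f volume)

lemma Ffun_integral {t : ℝ} (ht0 : 0 < t) (ht1 : t ≤ 1) :
    ∫ x, Ffun f t x = (∫ x in t..(1:ℝ), (gdens x t - 1) * f x) / t := by
  unfold Ffun
  rw [integral_indicator measurableSet_Ioc, ← intervalIntegral.integral_of_le ht1,
    intervalIntegral.integral_div]

include hmeas hpos hint in
lemma hDCT : Tendsto (fun t => ∫ x, Ffun f t x) (nhdsWithin 0 (Set.Ioi 0))
    (nhds (∫ x, Lfun f x)) := by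
  refine tendsto_integral_filter_of_dominated_convergence (bound := fun x => 6 * f x)
    ?_ ?_ (hint.const_mul 6) ?_
  · refine Eventually.of_forall fun t => ?_
    exact ((((gdens_meas t).sub measurable_const).mul hmeas).div_const t).indicator
      measurableSet_Ioc |>.aestronglyMeasurable
  · filter_upwards [Ioc_mem_nhdsGT_of_mem (⟨le_rfl, by norm_num⟩ : (0:ℝ) ∈ Set.Ico 0 (1/12))]
      with t ht
    refine Eventually.of_forall fun x => ?_
    by_cases hx : x ∈ Set.Ioc t 1
    · rw [Ffun, Set.indicator_of_mem hx]
      have hx0 : 0 ≤ x := (ht.1.trans hx.1).le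
      obtain ⟨hg1, -, hg6⟩ := gdens_bounds hx0 hx.2 ht.1.le ht.2
      have hv0 : 0 ≤ (gdens x t - 1) * f x / t :=
        div_nonneg (mul_nonneg (by linarith) (hpos x)) ht.1.le
      rw [Real.norm_eq_abs, abs_of_nonneg hv0, div_le_iff₀ ht.1]
      calc (gdens x t - 1) * f x ≤ (6*t) * f x :=
          mul_le_mul_of_nonneg_right hg6 (hpos x)
        _ = 6 * f x * t := by ring
    · rw [Ffun, Set.indicator_of_notMem hx, norm_zero]
      exact mul_nonneg (by norm_num) (hpos x)
  · refine Eventually.of_forall fun x => ?_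
    by_cases hx : x ∈ Set.Ioc (0:ℝ) 1
    · -- pointwise convergence on (0,1]
      have hx0 : 0 < x := hx.1
      have hx1 : x ≤ 1 := hx.2
      set ψ : ℝ → ℝ := fun t => 4 * f x /
        (Real.sqrt ((1+x)^2 - 4*t) * ((1+x) + Real.sqrt ((1+x)^2 - 4*t))) with hψ
      have hsqrt0 : Real.sqrt ((1+x)^2 - 4*0) = 1 + x := by
        rw [mul_zero, sub_zero, Real.sqrt_sq (by linarith)]
      have hcont : ContinuousAt ψ 0 := by
        refine ContinuousAt.div continuousAt_const ?_ ?_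
        · fun_prop
        · rw [hsqrt0]; positivity
      have hψ0 : ψ 0 = 2/(1+x)^2 * f x := by
        rw [hψ]; simp only [hsqrt0]
        have : (0:ℝ) < 1 + x := by linarith
        field_simp
        ring
      have htend : Tendsto ψ (nhdsWithin 0 (Set.Ioi 0)) (nhds (Lfun f x)) := by
        rw [Lfun, Set.indicator_of_mem hx, ← hψ0]
        exact hcont.tendsto.mono_left nhdsWithin_le_nhds
      refine htend.congr' ?_
      filter_upwards [Ioo_mem_nhdsGT_of_mem (⟨le_rfl, hx0⟩ : (0:ℝ) ∈ Set.Ico 0 x)]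
        with t ht
      have hmem : x ∈ Set.Ioc t 1 := ⟨ht.2, hx1⟩
      rw [Ffun, Set.indicator_of_mem hmem]
      set s := Real.sqrt ((1+x)^2 - 4*t) with hs
      have hD0 : 0 < (1+x)^2 - 4*t := by nlinarith [sq_nonneg (1-x), ht.1, ht.2]
      have hs0 : 0 < s := Real.sqrt_pos.mpr hD0
      have hs2 : s^2 = (1+x)^2 - 4*t := Real.sq_sqrt hD0.le
      have key : ((1+x) - s) * ((1+x) + s) = 4*t := by nlinarith
      have hgd : gdens x t = (1+x)/s := rfl
      rw [hψ, hgd]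
      have ht0' : t ≠ 0 := ne_of_gt ht.1
      have hden : (1+x) + s ≠ 0 := by positivity
      field_simp
      rw [← hs]
      linear_combination (f x * s) * key + (2 * f x * s) * hs2
    · -- outside (0,1] both sides vanish
      have hL : Lfun f x = 0 := Set.indicator_of_notMem hx _
      rw [hL]
      refine Tendsto.congr' ?_ tendsto_const_nhds
      filter_upwards [self_mem_nhdsWithin] with t (ht : t ∈ Set.Ioi (0:ℝ))
      have : x ∉ Set.Ioc t 1 := by
        simp only [Set.mem_Ioc, not_and_or, not_lt, not_le] at hx ⊢
        rcases hx with h | h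
        · exact Or.inl (h.trans ht.le)
        · exact Or.inr h
      rw [Ffun, Set.indicator_of_notMem this]

include hmeas hpos hzero in
lemma L_integral (hf0 : f 0 = 0)
    (hdens : μ = volume.withDensity (fun t => ENNReal.ofReal (f t))) :
    (∫ x, 2/(1+x)^2 ∂ μ) = ∫ x, Lfun f x := by
  rw [hdens]
  have h1 : (∫ x, 2/(1+x)^2 ∂ (volume.withDensity (fun t => ENNReal.ofReal (f t))))
      = ∫ x, (f x).toNNReal • (2/(1+x)^2) := by
    exact integral_withDensity_eq_integral_smul hmeas.real_toNNReal _
  rw [h1]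
  refine integral_congr_ae (Eventually.of_forall fun x => ?_)
  simp only [NNReal.smul_def, smul_eq_mul]
  rw [Real.coe_toNNReal _ (hpos x)]
  by_cases hx : x ∈ Set.Ioc (0:ℝ) 1
  · rw [Lfun, Set.indicator_of_mem hx]; ring
  · rw [Lfun, Set.indicator_of_notMem hx]
    have hfx : f x = 0 := by
      simp only [Set.mem_Ioc, not_and_or, not_lt, not_le] at hx
      rcases hx with h | h
      · rcases lt_or_eq_of_le h with h' | h'
        · exact hzero x (Or.inl h')
        · rw [h']; exact hf0
      · exact hzero x (Or.inr h)
    rw [hfx, zero_mul]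

include hmeas hpos hzero hint in
lemma L_pos (hf0 : f 0 = 0) (htot : ∫ x, f x = 1) : 0 < ∫ x, Lfun f x := by
  have hLint : Integrable (Lfun f) volume := by
    refine Integrable.mono' (hint.const_mul 2) ?_ (Eventually.of_forall fun x => ?_)
    · refine (Measurable.indicator ?_ measurableSet_Ioc).aestronglyMeasurable
      fun_prop
    · by_cases hx : x ∈ Set.Ioc (0:ℝ) 1
      · rw [Lfun, Set.indicator_of_mem hx, Real.norm_eq_abs]
        have h1 : (1:ℝ) ≤ (1+x)^2 := by nlinarith [hx.1]
        have h2 : 0 < (1+x)^2 := by nlinarith [hx.1]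
        have hle : 2/(1+x)^2 ≤ 2 := by
          rw [div_le_iff₀ h2]; nlinarith
        have hge : 0 ≤ 2/(1+x)^2 := by positivity
        rw [abs_of_nonneg (mul_nonneg hge (hpos x))]
        exact mul_le_mul_of_nonneg_right hle (hpos x)
      · rw [Lfun, Set.indicator_of_notMem hx, norm_zero]
        exact mul_nonneg (by norm_num) (hpos x)
  have hmono : (∫ x, (1/2) * f x) ≤ ∫ x, Lfun f x := by
    refine integral_mono (hint.const_mul _) hLint fun x => ?_
    by_cases hx : x ∈ Set.Ioc (0:ℝ) 1
    · rw [Lfun, Set.indicator_of_mem hx]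
      have h2 : 0 < (1+x)^2 := by nlinarith [hx.1]
      have h4 : (1+x)^2 ≤ 4 := by nlinarith [hx.1, hx.2]
      have : (1:ℝ)/2 ≤ 2/(1+x)^2 := by
        rw [div_le_div_iff₀ (by norm_num) h2]; nlinarith
      exact mul_le_mul_of_nonneg_right this (hpos x)
    · rw [Lfun, Set.indicator_of_notMem hx]
      have hfx : f x = 0 := by
        simp only [Set.mem_Ioc, not_and_or, not_lt, not_le] at hx
        rcases hx with h | h
        · rcases lt_or_eq_of_le h with h' | h'
          · exact hzero x (Or.inl h')
          · rw [h']; exact hf0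
        · exact hzero x (Or.inr h)
      simp [hfx]
  have : (∫ x, (1/2) * f x) = 1/2 := by
    rw [integral_const_mul, htot, mul_one]
  linarith

end

end RDEAux

open Filter in
/-- The version `f` of the density of the RDE solution satisfying the integral equation
tends to `0` as `t ↓ 0` and has right derivative `E[2/(1+X)²]` at `0`, i.e.
`lim_{t ↓ 0} f(t)/t = E[2/(1+X)²]`; since `f` vanishes on `(−∞, 0)`, `f` is not
differentiable at `0`. -/
theorem rde_density_right_derivative (μ : Measure ℝ) (hμ : IsRDESolution μ)
    (f : ℝ → ℝ) (hf : IsRDEDensity μ f) :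
    Tendsto f (nhdsWithin 0 (Set.Ioi 0)) (nhds 0) ∧
    Tendsto (fun t => f t / t) (nhdsWithin 0 (Set.Ioi 0))
      (nhds (∫ x, 2 / (1 + x) ^ 2 ∂ μ)) ∧
    ¬ DifferentiableAt ℝ f 0 := by
  obtain ⟨hprob, -⟩ := hμ
  obtain ⟨hmeas, hpos, hdens, hzero, heq⟩ := hf
  haveI := hprob
  have hlin : ∫⁻ x, ENNReal.ofReal (f x) = 1 := by
    have h := measure_univ (μ := μ)
    rw [hdens, withDensity_apply _ MeasurableSet.univ, Measure.restrict_univ] at h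
    exact h
  have hint : Integrable f volume :=
    ⟨hmeas.aestronglyMeasurable,
     (hasFiniteIntegral_iff_ofReal (Eventually.of_forall hpos)).mpr
       (by rw [hlin]; exact ENNReal.one_lt_top)⟩
  have htot : ∫ x, f x = 1 := by
    rw [integral_eq_lintegral_of_nonneg_ae (Eventually.of_forall hpos)
      hmeas.aestronglyMeasurable, hlin]
    simp
  have hf0 : f 0 = 0 := RDEAux.f_zero hmeas hpos hzero heq
  have hIoc : Set.Ioc (0:ℝ) (1/12) ∈ nhdsWithin (0:ℝ) (Set.Ioi 0) :=
    Ioc_mem_nhdsGT_of_mem ⟨le_rfl, by norm_num⟩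
  have part1 : Tendsto f (nhdsWithin 0 (Set.Ioi 0)) (nhds 0) := by
    refine squeeze_zero' (g := fun t => 12 * t) (Eventually.of_forall hpos) ?_ ?_
    · filter_upwards [hIoc] with t ht
      exact RDEAux.f_le hmeas hpos hzero hint htot heq ht.1 ht.2
    · have h12 : Tendsto (fun t : ℝ => 12 * t) (nhds 0) (nhds 0) := by
        simpa using (continuous_mul_left _).tendsto (0:ℝ)
      exact h12.mono_left nhdsWithin_le_nhds
  have hIeq : (∫ x, 2/(1+x)^2 ∂ μ) = ∫ x, RDEAux.Lfun f x :=
    RDEAux.L_integral hmeas hpos hzero hf0 hdens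
  have h2 : Tendsto (fun t => ∫ x, RDEAux.Ffun f t x) (nhdsWithin 0 (Set.Ioi 0))
      (nhds (∫ x, 2/(1+x)^2 ∂ μ)) := by
    rw [hIeq]; exact RDEAux.hDCT hmeas hpos hint
  have h1 : Tendsto (fun t => 2 * (∫ x in (0:ℝ)..t, gdens x t * f x) / t)
      (nhdsWithin 0 (Set.Ioi 0)) (nhds 0) := by
    refine squeeze_zero' (g := fun t => 72 * t) ?_ ?_ ?_
    · filter_upwards [hIoc] with t ht
      exact div_nonneg (mul_nonneg (by norm_num)
        (RDEAux.first_bound hmeas hpos hint ht.1 ht.2).1) ht.1.le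
    · filter_upwards [hIoc] with t ht
      have hA := (RDEAux.first_bound hmeas hpos hint ht.1 ht.2).2
      have hF := RDEAux.F_le hmeas hpos hzero hint htot heq ht.1 ht.2
      rw [div_le_iff₀ ht.1]
      nlinarith [ht.1]
    · have h72 : Tendsto (fun t : ℝ => 72 * t) (nhds 0) (nhds 0) := by
        simpa using (continuous_mul_left _).tendsto (0:ℝ)
      exact h72.mono_left nhdsWithin_le_nhds
  have part2 : Tendsto (fun t => f t / t) (nhdsWithin 0 (Set.Ioi 0))
      (nhds (∫ x, 2/(1+x)^2 ∂ μ)) := by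
    have hsum := h1.add h2
    rw [zero_add] at hsum
    refine hsum.congr' ?_
    filter_upwards [hIoc] with t ht
    rw [RDEAux.Ffun_integral ht.1 (by linarith [ht.2] : t ≤ 1),
        RDEAux.key_eq hmeas hpos hzero hint heq ht.1 ht.2, add_div]
  have hIpos : 0 < ∫ x, 2/(1+x)^2 ∂ μ := by
    rw [hIeq]; exact RDEAux.L_pos hmeas hpos hzero hint hf0 htot
  refine ⟨part1, part2, fun hd => ?_⟩
  have hD := hd.hasDerivAt
  rw [hasDerivAt_iff_tendsto_slope] at hD
  have hslope : ∀ t : ℝ, slope f 0 t = f t / t := by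
    intro t
    rw [slope_def_field, hf0, sub_zero, sub_zero]
  have hsub1 : nhdsWithin (0:ℝ) (Set.Ioi 0) ≤ nhdsWithin 0 {(0:ℝ)}ᶜ :=
    nhdsWithin_mono 0 (fun x hx => ne_of_gt hx)
  have hsub2 : nhdsWithin (0:ℝ) (Set.Iio 0) ≤ nhdsWithin 0 {(0:ℝ)}ᶜ :=
    nhdsWithin_mono 0 (fun x hx => ne_of_lt hx)
  have hr : Tendsto (fun t => f t / t) (nhdsWithin 0 (Set.Ioi 0)) (nhds (deriv f 0)) :=
    (hD.mono_left hsub1).congr hslope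
  have hl : Tendsto (fun t => f t / t) (nhdsWithin 0 (Set.Iio 0)) (nhds (deriv f 0)) :=
    (hD.mono_left hsub2).congr hslope
  have hzl : Tendsto (fun t => f t / t) (nhdsWithin 0 (Set.Iio 0)) (nhds 0) := by
    refine Tendsto.congr' ?_ tendsto_const_nhds
    filter_upwards [self_mem_nhdsWithin] with t (ht : t ∈ Set.Iio (0:ℝ))
    simp [hzero t (Or.inl ht)]
  have hd1 : deriv f 0 = ∫ x, 2/(1+x)^2 ∂ μ := tendsto_nhds_unique hr part2
  have hd2 : deriv f 0 = 0 := tendsto_nhds_unique hl hzl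
  rw [hd2] at hd1
  linarith
end
end

section
/- Let X be the solution of the recursive distributional equation X =_d √U·X + √U·(1−√U). Then for every real ε > 0 the negative moment E[X^{−2+ε}] is finite. -/
open MeasureTheory

noncomputable section

open Set
open scoped ENNReal

instance : IsProbabilityMeasure unif := by
  constructor
  simp [unif, Real.volume_Icc]

lemma measurable_rdeMap : Measurable rdeMap := by
  unfold rdeMap; fun_prop

lemma fix_apply (μ : Measure ℝ) (hμ : IsRDESolution μ) {S : Set ℝ} (hS : MeasurableSet S) :
    μ S = ∫⁻ x, unif {u | rdeMap (x, u) ∈ S} ∂μ := by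
  haveI := hμ.1
  conv_lhs => rw [← hμ.2]
  rw [Measure.map_apply measurable_rdeMap hS, Measure.prod_apply (measurable_rdeMap hS)]
  rfl

lemma unif_le {A B : Set ℝ} (h : A ∩ Set.Icc 0 1 ⊆ B) : unif A ≤ volume B := by
  rw [unif, Measure.restrict_apply' measurableSet_Icc]
  exact measure_mono h

lemma E_neg {x u s : ℝ} (hs : 0 < s) (hu : u ∈ Icc (0:ℝ) 1)
    (h : rdeMap (x, u) ≤ -s) : x ≤ -s ∧ s^2 / x^2 ≤ u := by
  set a := Real.sqrt u with ha
  have ha0 : 0 ≤ a := Real.sqrt_nonneg u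
  have ha1 : a ≤ 1 := Real.sqrt_le_one.mpr hu.2
  have hau : a^2 = u := Real.sq_sqrt hu.1
  have h' : a * x + a * (1 - a) ≤ -s := h
  have h1 : 0 ≤ a * (1 - a) := by nlinarith
  have h2 : a * x ≤ -s := by nlinarith
  have hxneg : x < 0 := by
    by_contra hc; push_neg at hc
    nlinarith [mul_nonneg ha0 hc]
  have hx : x ≤ -s := by
    nlinarith [mul_nonneg (by linarith : (0:ℝ) ≤ 1 - a) (by linarith : (0:ℝ) ≤ -x)]
  have hx2 : 0 < x^2 := by nlinarith
  refine ⟨hx, ?_⟩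
  rw [div_le_iff₀ hx2]
  nlinarith [mul_nonneg (by linarith : (0:ℝ) ≤ -(a*x) - s) (by linarith : (0:ℝ) ≤ -(a*x) + s)]

lemma E_tail {x u t : ℝ} (ht : 2 ≤ t) (hu : u ∈ Icc (0:ℝ) 1)
    (h : t ≤ rdeMap (x, u)) : t - 1 ≤ x ∧ t^2 / (x+1)^2 ≤ u := by
  set a := Real.sqrt u with ha
  have ha0 : 0 ≤ a := Real.sqrt_nonneg u
  have ha1 : a ≤ 1 := Real.sqrt_le_one.mpr hu.2
  have hau : a^2 = u := Real.sq_sqrt hu.1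
  have h' : t ≤ a * x + a * (1 - a) := h
  have h2 : t ≤ a * (x + 1) := by nlinarith
  have hx1 : 0 < x + 1 := by
    by_contra hc; push_neg at hc
    nlinarith [mul_nonpos_of_nonneg_of_nonpos ha0 hc]
  have hx : t - 1 ≤ x := by
    nlinarith [mul_nonneg (by linarith : (0:ℝ) ≤ 1 - a) hx1.le]
  refine ⟨hx, ?_⟩
  rw [div_le_iff₀ (by positivity)]
  nlinarith [mul_nonneg (by linarith : (0:ℝ) ≤ a*(x+1) - t) (by linarith : (0:ℝ) ≤ a*(x+1) + t)]

lemma E_zero {x u t : ℝ} (ht : 0 < t) (ht4 : t ≤ 1/4) (hx : 0 ≤ x) (hu : u ∈ Icc (0:ℝ) 1)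
    (h : rdeMap (x, u) ≤ t) : u ≤ 4*t^2 ∨ (x ≤ 2*t ∧ (1-2*t)^2 ≤ u) := by
  set a := Real.sqrt u with ha
  have ha0 : 0 ≤ a := Real.sqrt_nonneg u
  have ha1 : a ≤ 1 := Real.sqrt_le_one.mpr hu.2
  have hau : a^2 = u := Real.sq_sqrt hu.1
  have h' : a * x + a * (1 - a) ≤ t := h
  have h1 : a * (1 - a) ≤ t := by nlinarith [mul_nonneg ha0 hx]
  rcases le_or_gt a (1/2) with hc | hc
  · left
    have h2 : a ≤ 2*t := by nlinarith
    nlinarith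
  · right
    have h2 : 1 - a ≤ 2*t := by nlinarith
    have h3 : 1 - 2*t ≤ a := by linarith
    constructor
    · -- a * x ≤ t, a ≥ 1/2
      nlinarith [mul_nonneg ha0 hx]
    · nlinarith

lemma unif_neg_bound {x s : ℝ} (hs : 0 < s) :
    unif {u | rdeMap (x, u) ≤ -s}
      ≤ Set.indicator (Iic (-s)) (fun x => ENNReal.ofReal (1 - s^2/x^2)) x := by
  by_cases hx : x ≤ -s
  · rw [Set.indicator_of_mem (by exact hx)]
    refine le_trans (unif_le (B := Icc (s^2/x^2) 1) ?_) ?_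
    · rintro u ⟨hu1, hu2⟩
      exact ⟨(E_neg hs hu2 hu1).2, hu2.2⟩
    · rw [Real.volume_Icc]
  · rw [Set.indicator_of_notMem (by exact hx)]
    refine le_trans (unif_le (B := (∅ : Set ℝ)) ?_) (by simp)
    rintro u ⟨hu1, hu2⟩
    exact hx (E_neg hs hu2 hu1).1

lemma mu_neg_zero (μ : Measure ℝ) (hμ : IsRDESolution μ) {s : ℝ} (hs : 0 < s) :
    μ (Iic (-s)) = 0 := by
  haveI := hμ.1
  set S := Iic (-s) with hS
  set g : ℝ → ℝ≥0∞ := fun x => ENNReal.ofReal (s^2/x^2) with hg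
  have hgm : Measurable g := by fun_prop
  have hI_le : ∫⁻ x in S, g x ∂μ ≤ μ S := by
    have : ∫⁻ x in S, g x ∂μ ≤ ∫⁻ _ in S, 1 ∂μ := by
      refine setLIntegral_mono measurable_const fun x hx => ?_
      have hx2 : 0 < x^2 := by nlinarith [hx.out]
      have : s^2/x^2 ≤ 1 := by
        rw [div_le_one hx2]; nlinarith [hx.out]
      calc g x ≤ ENNReal.ofReal 1 := ENNReal.ofReal_le_ofReal this
        _ = 1 := by simp
    simpa using this
  have hfin : μ S ≠ ⊤ := measure_ne_top μ S
  have key : μ S ≤ μ S - ∫⁻ x in S, g x ∂μ := by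
    calc μ S = ∫⁻ x, unif {u | rdeMap (x, u) ≤ -s} ∂μ := fix_apply μ hμ measurableSet_Iic
    _ ≤ ∫⁻ x, Set.indicator S (fun x => ENNReal.ofReal (1 - s^2/x^2)) x ∂μ :=
        lintegral_mono fun x => unif_neg_bound hs
    _ = ∫⁻ x in S, ENNReal.ofReal (1 - s^2/x^2) ∂μ := lintegral_indicator measurableSet_Iic _
    _ = ∫⁻ x in S, (1 - g x) ∂μ := by
        refine setLIntegral_congr_fun measurableSet_Iic ?_
        intro x hx
        rw [hg]
        beta_reduce
        rw [← ENNReal.ofReal_one, ← ENNReal.ofReal_sub _ (by positivity)]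
    _ = μ S - ∫⁻ x in S, g x ∂μ := by
        have hae : ∀ᵐ x ∂μ.restrict S, g x ≤ (fun _ => (1:ℝ≥0∞)) x := by
          refine ae_restrict_of_forall_mem measurableSet_Iic fun x hx => ?_
          have hx2 : 0 < x^2 := by nlinarith [hx.out]
          have h1 : s^2/x^2 ≤ 1 := by
            rw [div_le_one hx2]; nlinarith [hx.out]
          calc g x ≤ ENNReal.ofReal 1 := ENNReal.ofReal_le_ofReal h1
            _ = 1 := by simp
        rw [lintegral_sub hgm (by exact ne_top_of_le_ne_top hfin hI_le) hae]
        simp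
  have hzero : ∫⁻ x in S, g x ∂μ = 0 := by
    have h2 : μ S + ∫⁻ x in S, g x ∂μ ≤ μ S + 0 := by
      calc μ S + ∫⁻ x in S, g x ∂μ ≤ (μ S - ∫⁻ x in S, g x ∂μ) + ∫⁻ x in S, g x ∂μ :=
            add_le_add_left key _
      _ = μ S := tsub_add_cancel_of_le hI_le
      _ = μ S + 0 := by simp
    exact le_zero_iff.mp ((ENNReal.add_le_add_iff_left hfin).mp h2)
  -- g > 0 on S, so μ S = 0
  have := (lintegral_eq_zero_iff hgm).mp hzero
  rw [Filter.EventuallyEq, ae_restrict_iff' measurableSet_Iic] at this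
  rw [ae_iff] at this
  refine measure_mono_null (fun x hx => ?_) this
  simp only [mem_setOf_eq, not_forall]
  refine ⟨hx, ?_⟩
  have hx2 : 0 < x^2 := by nlinarith [hx.out]
  have : 0 < s^2/x^2 := by positivity
  simp only [hg, Pi.zero_apply]
  exact ne_of_gt (ENNReal.ofReal_pos.mpr this)

lemma mu_Iio_zero (μ : Measure ℝ) (hμ : IsRDESolution μ) : μ (Iio 0) = 0 := by
  have hsub : Iio (0:ℝ) ⊆ ⋃ n : ℕ, Iic (-(1/(n+1))) := by
    intro x hx
    obtain ⟨n, hn⟩ := exists_nat_one_div_lt (show (0:ℝ) < -x by simpa using hx.out)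
    exact mem_iUnion.mpr ⟨n, by simp only [mem_Iic]; push_cast; linarith⟩
  refine measure_mono_null hsub (measure_iUnion_null fun n => mu_neg_zero μ hμ (by positivity))

lemma ennreal_cancel {a b I : ℝ≥0∞} (ha : a ≠ ⊤) (hIa : I ≤ a) (h : a ≤ b + (a - I)) :
    I ≤ b := by
  have h2 : a + I ≤ a + b := by
    calc a + I ≤ (b + (a - I)) + I := add_le_add_left h _
    _ = b + ((a - I) + I) := by ring
    _ = b + a := by rw [tsub_add_cancel_of_le hIa]
    _ = a + b := add_comm _ _
  exact (ENNReal.add_le_add_iff_left ha).mp h2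

lemma unif_tail_bound {x t : ℝ} (ht : 2 ≤ t) :
    unif {u | t ≤ rdeMap (x, u)}
      ≤ Set.indicator (Ici (t-1)) (fun x => ENNReal.ofReal (1 - t^2/(x+1)^2)) x := by
  by_cases hx : t - 1 ≤ x
  · rw [Set.indicator_of_mem (by exact hx)]
    refine le_trans (unif_le (B := Icc (t^2/(x+1)^2) 1) ?_) ?_
    · rintro u ⟨hu1, hu2⟩
      exact ⟨(E_tail ht hu2 hu1).2, hu2.2⟩
    · rw [Real.volume_Icc]
  · rw [Set.indicator_of_notMem (by exact hx)]
    refine le_trans (unif_le (B := (∅ : Set ℝ)) ?_) (by simp)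
    rintro u ⟨hu1, hu2⟩
    exact hx (E_tail ht hu2 hu1).1

lemma tail_I_bound (μ : Measure ℝ) (hμ : IsRDESolution μ) {t : ℝ} (ht : 2 ≤ t) :
    ∫⁻ x in Ici t, ENNReal.ofReal (t^2/(x+1)^2) ∂μ
      ≤ ENNReal.ofReal (3/t) * μ (Ici (t-1)) := by
  haveI := hμ.1
  set g : ℝ → ℝ≥0∞ := fun x => ENNReal.ofReal (t^2/(x+1)^2) with hg
  have hgm : Measurable g := by fun_prop
  have hIa : ∫⁻ x in Ici t, g x ∂μ ≤ μ (Ici t) := by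
    have : ∫⁻ x in Ici t, g x ∂μ ≤ ∫⁻ _ in Ici t, 1 ∂μ := by
      refine setLIntegral_mono measurable_const fun x hx => ?_
      have hx1 : (0:ℝ) < x + 1 := by nlinarith [hx.out]
      have h1 : t^2/(x+1)^2 ≤ 1 := by
        rw [div_le_one (by positivity)]
        nlinarith [hx.out]
      calc g x ≤ ENNReal.ofReal 1 := ENNReal.ofReal_le_ofReal h1
        _ = 1 := by simp
    simpa using this
  refine ennreal_cancel (measure_ne_top μ _) hIa ?_
  calc μ (Ici t) = ∫⁻ x, unif {u | t ≤ rdeMap (x, u)} ∂μ := by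
        rw [fix_apply μ hμ measurableSet_Ici]; rfl
  _ ≤ ∫⁻ x, Set.indicator (Ici (t-1)) (fun x => ENNReal.ofReal (1 - t^2/(x+1)^2)) x ∂μ :=
        lintegral_mono fun x => unif_tail_bound ht
  _ = ∫⁻ x in Ici (t-1), ENNReal.ofReal (1 - t^2/(x+1)^2) ∂μ :=
        lintegral_indicator measurableSet_Ici _
  _ = ∫⁻ x in Ico (t-1) t ∪ Ici t, ENNReal.ofReal (1 - t^2/(x+1)^2) ∂μ := by
        congr 1
        rw [Ico_union_Ici_eq_Ici (by linarith)]
  _ = (∫⁻ x in Ico (t-1) t, ENNReal.ofReal (1 - t^2/(x+1)^2) ∂μ)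
        + ∫⁻ x in Ici t, ENNReal.ofReal (1 - t^2/(x+1)^2) ∂μ := by
        rw [lintegral_union measurableSet_Ici ((Iio_disjoint_Ici le_rfl).mono_left Ico_subset_Iio_self)]
  _ ≤ ENNReal.ofReal (3/t) * μ (Ici (t-1)) + (μ (Ici t) - ∫⁻ x in Ici t, g x ∂μ) := by
        gcongr
        · -- first piece
          calc ∫⁻ x in Ico (t-1) t, ENNReal.ofReal (1 - t^2/(x+1)^2) ∂μ
              ≤ ∫⁻ _ in Ico (t-1) t, ENNReal.ofReal (3/t) ∂μ := by
                refine setLIntegral_mono measurable_const fun x hx => ?_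
                refine ENNReal.ofReal_le_ofReal ?_
                have h1 : t ≤ x + 1 := by nlinarith [hx.1]
                have h2 : x + 1 ≤ t + 1 := by nlinarith [hx.2]
                have h3 : (0:ℝ) < x + 1 := by linarith
                have h4 : t^2/(t+1)^2 ≤ t^2/(x+1)^2 := by
                  apply div_le_div_of_nonneg_left (by positivity) (by positivity)
                  nlinarith
                have h5 : 1 - t^2/(t+1)^2 ≤ 3/t := by
                  have e : 1 - t^2/(t+1)^2 = (2*t+1)/(t+1)^2 := by
                    field_simp; ring
                  rw [e, div_le_div_iff₀ (by positivity) (by positivity)]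
                  nlinarith
                linarith
          _ = ENNReal.ofReal (3/t) * μ (Ico (t-1) t) := setLIntegral_const _ _
          _ ≤ ENNReal.ofReal (3/t) * μ (Ici (t-1)) := by
                gcongr
                exact Ico_subset_Ici_self
        · -- second piece
          have hae : ∀ᵐ x ∂μ.restrict (Ici t), g x ≤ (fun _ => (1:ℝ≥0∞)) x := by
            refine ae_restrict_of_forall_mem measurableSet_Ici fun x hx => ?_
            have h1 : t^2/(x+1)^2 ≤ 1 := by
              rw [div_le_one (by nlinarith [hx.out])]
              nlinarith [hx.out]
            calc g x ≤ ENNReal.ofReal 1 := ENNReal.ofReal_le_ofReal h1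
              _ = 1 := by simp
          have : ∫⁻ x in Ici t, ENNReal.ofReal (1 - t^2/(x+1)^2) ∂μ
              = ∫⁻ x in Ici t, ((fun _ => (1:ℝ≥0∞)) x - g x) ∂μ := by
            refine setLIntegral_congr_fun measurableSet_Ici ?_
            intro x hx
            rw [hg]
            beta_reduce
            rw [← ENNReal.ofReal_one, ← ENNReal.ofReal_sub _ (by positivity)]
          rw [this, lintegral_sub hgm (ne_top_of_le_ne_top (measure_ne_top μ _) hIa) hae]
          simp

lemma tail_chunk (μ : Measure ℝ) (hμ : IsRDESolution μ) {t : ℝ} (ht : 2 ≤ t) :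
    μ (Icc t (2*t)) ≤ ENNReal.ofReal (27/t) * μ (Ici (t-1)) := by
  haveI := hμ.1
  have h1 : ENNReal.ofReal (1/9) * μ (Icc t (2*t))
      ≤ ∫⁻ x in Ici t, ENNReal.ofReal (t^2/(x+1)^2) ∂μ := by
    calc ENNReal.ofReal (1/9) * μ (Icc t (2*t))
        = ∫⁻ _ in Icc t (2*t), ENNReal.ofReal (1/9) ∂μ := (setLIntegral_const _ _).symm
    _ ≤ ∫⁻ x in Icc t (2*t), ENNReal.ofReal (t^2/(x+1)^2) ∂μ := by
        refine setLIntegral_mono (by fun_prop) fun x hx => ?_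
        refine ENNReal.ofReal_le_ofReal ?_
        have h2 : x + 1 ≤ 2*t + 1 := by nlinarith [hx.2]
        have h3 : (0:ℝ) < x + 1 := by nlinarith [hx.1]
        rw [div_le_div_iff₀ (by norm_num) (by positivity)]
        nlinarith
    _ ≤ ∫⁻ x in Ici t, ENNReal.ofReal (t^2/(x+1)^2) ∂μ := by
        refine lintegral_mono_set fun x hx => hx.1
  have h2 := le_trans h1 (tail_I_bound μ hμ ht)
  calc μ (Icc t (2*t)) = ENNReal.ofReal 9 * (ENNReal.ofReal (1/9) * μ (Icc t (2*t))) := by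
        rw [← mul_assoc, ← ENNReal.ofReal_mul (by norm_num)]
        norm_num
  _ ≤ ENNReal.ofReal 9 * (ENNReal.ofReal (3/t) * μ (Ici (t-1))) := by gcongr
  _ = ENNReal.ofReal (27/t) * μ (Ici (t-1)) := by
        rw [← mul_assoc, ← ENNReal.ofReal_mul (by norm_num)]
        congr 1
        ring

lemma tail_cover {t : ℝ} (ht : 2 ≤ t) :
    Ici t ⊆ ⋃ k : ℕ, Icc ((2:ℝ)^k * t) ((2:ℝ)^(k+1) * t) := by
  intro x hx
  have hx' : t ≤ x := hx
  have ht0 : (0:ℝ) < t := by linarith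
  set n : ℕ := ⌊x/t⌋₊ with hn
  have hxt : 1 ≤ x/t := (one_le_div ht0).mpr hx'
  have hn1 : 1 ≤ n := by
    rw [hn]
    exact Nat.one_le_iff_ne_zero.mpr (by
      intro h0
      have := Nat.floor_eq_zero.mp h0
      linarith)
  set k : ℕ := Nat.log 2 n with hk
  refine mem_iUnion.mpr ⟨k, ?_, ?_⟩
  · have h1 : (2:ℕ)^k ≤ n := Nat.pow_log_le_self 2 (by omega)
    have h2 : ((2:ℝ))^k ≤ n := by
      calc ((2:ℝ))^k = ((2^k : ℕ) : ℝ) := by push_cast; ring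
      _ ≤ (n:ℝ) := by exact_mod_cast h1
    have h3 : (n:ℝ) ≤ x/t := Nat.floor_le (by linarith)
    rw [← le_div_iff₀ ht0]
    linarith
  · have h1 : n < 2^(k+1) := Nat.lt_pow_succ_log_self (by norm_num) n
    have h2 : x/t < n + 1 := Nat.lt_floor_add_one _
    have h3 : (n:ℝ) + 1 ≤ ((2:ℝ))^(k+1) := by
      calc (n:ℝ) + 1 = ((n+1 : ℕ) : ℝ) := by push_cast; ring
      _ ≤ ((2^(k+1) : ℕ) : ℝ) := by exact_mod_cast h1
      _ = (2:ℝ)^(k+1) := by push_cast; ring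
    rw [← div_le_iff₀ ht0]
    linarith

lemma tail_halving (μ : Measure ℝ) (hμ : IsRDESolution μ) {t : ℝ} (ht : 2 ≤ t) :
    μ (Ici t) ≤ ENNReal.ofReal (54/t) * μ (Ici (t-1)) := by
  haveI := hμ.1
  have ht0 : (0:ℝ) < t := by linarith
  calc μ (Ici t) ≤ μ (⋃ k : ℕ, Icc ((2:ℝ)^k * t) ((2:ℝ)^(k+1) * t)) :=
        measure_mono (tail_cover ht)
  _ ≤ ∑' k : ℕ, μ (Icc ((2:ℝ)^k * t) ((2:ℝ)^(k+1) * t)) := measure_iUnion_le _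
  _ ≤ ∑' k : ℕ, ENNReal.ofReal (27/t) * ((2:ℝ≥0∞)⁻¹)^k * μ (Ici (t-1)) := by
      refine ENNReal.tsum_le_tsum fun k => ?_
      have hp : (1:ℝ) ≤ (2:ℝ)^k := one_le_pow₀ (by norm_num)
      have hkt : 2 ≤ (2:ℝ)^k * t := by nlinarith
      have e1 : (2:ℝ)^(k+1) * t = 2 * ((2:ℝ)^k * t) := by ring
      have := tail_chunk μ hμ hkt
      rw [e1]
      refine le_trans this ?_
      have e2 : ENNReal.ofReal (27/((2:ℝ)^k * t)) = ENNReal.ofReal (27/t) * ((2:ℝ≥0∞)⁻¹)^k := by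
        have : (27:ℝ)/((2:ℝ)^k * t) = (27/t) * (1/2)^k := by
          field_simp
          rw [← mul_pow]; norm_num
        rw [this, ENNReal.ofReal_mul (by positivity), ENNReal.ofReal_pow (by norm_num)]
        congr 2
        rw [ENNReal.ofReal_div_of_pos (by norm_num)]
        norm_num
      rw [← e2]
      exact mul_le_mul_right (measure_mono (Ici_subset_Ici.mpr (by nlinarith))) _
  _ = ENNReal.ofReal (27/t) * μ (Ici (t-1)) * ∑' k : ℕ, ((2:ℝ≥0∞)⁻¹)^k := by
      rw [ENNReal.tsum_mul_right, ENNReal.tsum_mul_left]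
      ring
  _ = ENNReal.ofReal (54/t) * μ (Ici (t-1)) := by
      rw [ENNReal.tsum_geometric, ENNReal.one_sub_inv_two, inv_inv]
      rw [show ENNReal.ofReal (54/t) = ENNReal.ofReal (27/t) * 2 by
        rw [show (2:ℝ≥0∞) = ENNReal.ofReal 2 by norm_num, ← ENNReal.ofReal_mul (by positivity)]
        congr 1
        ring]
      ring

lemma tail_geom (μ : Measure ℝ) (hμ : IsRDESolution μ) (j : ℕ) :
    μ (Ici (108 + (j:ℝ))) ≤ ((2:ℝ≥0∞)⁻¹)^j := by
  haveI := hμ.1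
  induction j with
  | zero => simpa using prob_le_one
  | succ j ih =>
    have h1 : (2:ℝ) ≤ 109 + (j:ℝ) := by
      have : (0:ℝ) ≤ (j:ℝ) := Nat.cast_nonneg j
      linarith
    have h2 := tail_halving μ hμ (t := 109 + (j:ℝ)) h1
    have e1 : (109 + (j:ℝ)) - 1 = 108 + (j:ℝ) := by ring
    have e2 : (108 + ((j+1 : ℕ)):ℝ) = 109 + (j:ℝ) := by push_cast; ring
    rw [e2]
    refine le_trans h2 ?_
    rw [e1]
    calc ENNReal.ofReal (54/(109 + (j:ℝ))) * μ (Ici (108 + (j:ℝ)))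
        ≤ (2:ℝ≥0∞)⁻¹ * ((2:ℝ≥0∞)⁻¹)^j := by
          refine mul_le_mul' ?_ ih
          have : (54:ℝ)/(109 + (j:ℝ)) ≤ 1/2 := by
            rw [div_le_div_iff₀ (by positivity) (by norm_num)]
            have : (0:ℝ) ≤ (j:ℝ) := Nat.cast_nonneg j
            linarith
          refine le_trans (ENNReal.ofReal_le_ofReal this) ?_
          rw [ENNReal.ofReal_div_of_pos (by norm_num)]
          norm_num
    _ = ((2:ℝ≥0∞)⁻¹)^(j+1) := by ring

lemma tail_geom' (μ : Measure ℝ) (hμ : IsRDESolution μ) (n : ℕ) :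
    μ (Ici (1 + (n:ℝ))) ≤ (2:ℝ≥0∞)^107 * ((2:ℝ≥0∞)⁻¹)^n := by
  haveI := hμ.1
  rcases le_or_gt 107 n with hn | hn
  · set j := n - 107 with hj
    have hnj : n = 107 + j := by omega
    have e : (1 + (n:ℝ)) = 108 + (j:ℝ) := by rw [hnj]; push_cast; ring
    rw [e]
    refine le_trans (tail_geom μ hμ j) ?_
    rw [hnj]
    rw [pow_add]
    rw [show ((2:ℝ≥0∞))^107 * (((2:ℝ≥0∞))⁻¹^107 * ((2:ℝ≥0∞))⁻¹^j)
        = ((2:ℝ≥0∞) * (2:ℝ≥0∞)⁻¹)^107 * ((2:ℝ≥0∞))⁻¹^j by rw [mul_pow]; ring]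
    rw [ENNReal.mul_inv_cancel (by norm_num) (by norm_num)]
    simp
  · calc μ (Ici (1 + (n:ℝ))) ≤ 1 := prob_le_one
    _ ≤ (2:ℝ≥0∞)^(107 - n) := one_le_pow_of_one_le' (by norm_num) _
    _ = (2:ℝ≥0∞)^107 * ((2:ℝ≥0∞)⁻¹)^n := by
        have h107 : 107 = (107 - n) + n := by omega
        rw [show ((2:ℝ≥0∞))^107 = (2:ℝ≥0∞)^((107-n)+n) by rw [← h107]]
        rw [pow_add, mul_assoc, ← mul_pow, ENNReal.mul_inv_cancel (by norm_num) (by norm_num)]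
        simp

lemma summable_aux (k : ℕ) : Summable (fun n : ℕ => ((n:ℝ)+2)^k * (1/2)^n) := by
  have h : ∀ n : ℕ, ((n:ℝ)+2)^k * (1/2)^n
      = ∑ i ∈ Finset.range (k+1), ((n:ℝ)^i * (1/2)^n) * (2^(k-i) * (k.choose i)) := by
    intro n
    rw [add_pow, Finset.sum_mul]
    refine Finset.sum_congr rfl fun i _ => by ring
  refine Summable.congr ?_ (fun n => (h n).symm)
  refine summable_sum fun i _ => ?_
  exact (summable_pow_mul_geometric_of_norm_lt_one i (by norm_num : ‖(1:ℝ)/2‖ < 1)).mul_right _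

lemma half_eq : ENNReal.ofReal ((1:ℝ)/2) = (2:ℝ≥0∞)⁻¹ := by
  rw [ENNReal.ofReal_div_of_pos (by norm_num)]
  norm_num

lemma tail_integral (μ : Measure ℝ) (hμ : IsRDESolution μ) {p : ℝ} (hp : 0 ≤ p) :
    ∫⁻ x in Ioi 1, ENNReal.ofReal (x ^ p) ∂μ < ⊤ := by
  haveI := hμ.1
  set k : ℕ := ⌈p⌉₊ with hk
  have hcover : Ioi (1:ℝ) ⊆ ⋃ n : ℕ, Ico (1 + (n:ℝ)) (2 + n) := by
    intro x hx
    have hx1 : (1:ℝ) < x := hx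
    refine mem_iUnion.mpr ⟨⌊x - 1⌋₊, ?_, ?_⟩
    · have := Nat.floor_le (show (0:ℝ) ≤ x - 1 by linarith)
      linarith
    · have := Nat.lt_floor_add_one (x - 1)
      linarith
  have hterm : ∀ n : ℕ, ∫⁻ x in Ico (1 + (n:ℝ)) (2 + n), ENNReal.ofReal (x ^ p) ∂μ
      ≤ (2:ℝ≥0∞)^107 * ENNReal.ofReal (((n:ℝ)+2)^k * (1/2)^n) := by
    intro n
    have hn0 : (0:ℝ) ≤ (n:ℝ) := Nat.cast_nonneg n
    calc ∫⁻ x in Ico (1 + (n:ℝ)) (2 + n), ENNReal.ofReal (x ^ p) ∂μ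
        ≤ ∫⁻ _ in Ico (1 + (n:ℝ)) (2 + n), ENNReal.ofReal (((n:ℝ)+2)^k) ∂μ := by
          refine setLIntegral_mono measurable_const fun x hx => ?_
          refine ENNReal.ofReal_le_ofReal ?_
          have hx0 : (0:ℝ) ≤ x := by have := hx.1; linarith
          have hx2 : x ≤ 2 + (n:ℝ) := le_of_lt hx.2
          calc x ^ p ≤ (2 + (n:ℝ)) ^ p := Real.rpow_le_rpow hx0 hx2 hp
          _ ≤ (2 + (n:ℝ)) ^ ((k:ℕ):ℝ) :=
              Real.rpow_le_rpow_of_exponent_le (by linarith) (Nat.le_ceil p)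
          _ = (2 + (n:ℝ)) ^ (k:ℕ) := Real.rpow_natCast _ _
          _ = ((n:ℝ)+2) ^ (k:ℕ) := by ring
    _ = ENNReal.ofReal (((n:ℝ)+2)^k) * μ (Ico (1 + (n:ℝ)) (2 + n)) := setLIntegral_const _ _
    _ ≤ ENNReal.ofReal (((n:ℝ)+2)^k) * ((2:ℝ≥0∞)^107 * ((2:ℝ≥0∞)⁻¹)^n) := by
          refine mul_le_mul_right ?_ _
          refine le_trans (measure_mono Ico_subset_Ici_self) (tail_geom' μ hμ n)
    _ = (2:ℝ≥0∞)^107 * ENNReal.ofReal (((n:ℝ)+2)^k * (1/2)^n) := by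
          rw [ENNReal.ofReal_mul (by positivity), ENNReal.ofReal_pow (by positivity),
            ENNReal.ofReal_pow (by norm_num), half_eq]
          ring
  calc ∫⁻ x in Ioi 1, ENNReal.ofReal (x ^ p) ∂μ
      ≤ ∫⁻ x in ⋃ n : ℕ, Ico (1 + (n:ℝ)) (2 + n), ENNReal.ofReal (x ^ p) ∂μ :=
        lintegral_mono_set hcover
  _ ≤ ∑' n : ℕ, ∫⁻ x in Ico (1 + (n:ℝ)) (2 + n), ENNReal.ofReal (x ^ p) ∂μ :=
        lintegral_iUnion_le _ _
  _ ≤ ∑' n : ℕ, (2:ℝ≥0∞)^107 * ENNReal.ofReal (((n:ℝ)+2)^k * (1/2)^n) :=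
        ENNReal.tsum_le_tsum hterm
  _ = (2:ℝ≥0∞)^107 * ∑' n : ℕ, ENNReal.ofReal (((n:ℝ)+2)^k * (1/2)^n) := ENNReal.tsum_mul_left
  _ = (2:ℝ≥0∞)^107 * ENNReal.ofReal (∑' n : ℕ, ((n:ℝ)+2)^k * (1/2)^n) := by
        rw [ENNReal.ofReal_tsum_of_nonneg (fun n => by positivity) (summable_aux k)]
  _ < ⊤ := by
        refine ENNReal.mul_lt_top ?_ ENNReal.ofReal_lt_top
        exact ENNReal.pow_lt_top (by norm_num)

lemma unif_zero_bound {x t : ℝ} (ht : 0 < t) (ht4 : t ≤ 1/4) (hx : 0 ≤ x) :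
    unif {u | rdeMap (x, u) ≤ t}
      ≤ ENNReal.ofReal (4*t^2)
        + Set.indicator (Iic (2*t)) (fun _ => ENNReal.ofReal (4*t)) x := by
  by_cases hx2 : x ≤ 2*t
  · rw [Set.indicator_of_mem (by exact hx2)]
    refine le_trans (unif_le (B := Icc 0 (4*t^2) ∪ Icc ((1-2*t)^2) 1) ?_) ?_
    · rintro u ⟨hu1, hu2⟩
      rcases E_zero ht ht4 hx hu2 hu1 with h | h
      · exact Or.inl ⟨hu2.1, h⟩
      · exact Or.inr ⟨h.2, hu2.2⟩
    · refine le_trans (measure_union_le _ _) ?_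
      rw [Real.volume_Icc, Real.volume_Icc]
      gcongr
      · linarith
      · nlinarith
  · rw [Set.indicator_of_notMem (by exact hx2)]
    rw [add_zero]
    refine le_trans (unif_le (B := Icc 0 (4*t^2)) ?_) ?_
    · rintro u ⟨hu1, hu2⟩
      rcases E_zero ht ht4 hx hu2 hu1 with h | h
      · exact ⟨hu2.1, h⟩
      · exact absurd h.1 hx2
    · rw [Real.volume_Icc]
      exact ENNReal.ofReal_le_ofReal (by linarith)

lemma F_rec (μ : Measure ℝ) (hμ : IsRDESolution μ) {t : ℝ} (ht : 0 < t) (ht4 : t ≤ 1/4) :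
    μ (Iic t) ≤ ENNReal.ofReal (4*t^2) + ENNReal.ofReal (4*t) * μ (Iic (2*t)) := by
  haveI := hμ.1
  have hae : ∀ᵐ x ∂μ, (0:ℝ) ≤ x := by
    rw [ae_iff]
    refine measure_mono_null (fun x hx => ?_) (mu_Iio_zero μ hμ)
    simpa using hx
  calc μ (Iic t) = ∫⁻ x, unif {u | rdeMap (x, u) ≤ t} ∂μ := by
        rw [fix_apply μ hμ measurableSet_Iic]; rfl
  _ ≤ ∫⁻ x, (ENNReal.ofReal (4*t^2)
        + Set.indicator (Iic (2*t)) (fun _ => ENNReal.ofReal (4*t)) x) ∂μ := by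
        refine lintegral_mono_ae (hae.mono fun x hx => unif_zero_bound ht ht4 hx)
  _ = ENNReal.ofReal (4*t^2) + ENNReal.ofReal (4*t) * μ (Iic (2*t)) := by
        rw [lintegral_add_left measurable_const]
        rw [lintegral_const, lintegral_indicator measurableSet_Iic]
        simp [measure_univ]

lemma F_bound (μ : Measure ℝ) (hμ : IsRDESolution μ) {t : ℝ} (ht : 0 < t) :
    μ (Iic t) ≤ ENNReal.ofReal (360000 * t^2) := by
  haveI := hμ.1
  rcases le_or_gt t (1/600) with h600 | h600
  · have h1 := F_rec μ hμ ht (by linarith)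
    have h2 := F_rec μ hμ (by linarith : (0:ℝ) < 2*t) (by linarith)
    have h3 := F_rec μ hμ (by linarith : (0:ℝ) < 4*t) (by linarith)
    have e2 : (2:ℝ)*(2*t) = 4*t := by ring
    have e3 : (2:ℝ)*(4*t) = 8*t := by ring
    rw [e2] at h2
    rw [e3] at h3
    have h8 : μ (Iic (8*t)) ≤ 1 := prob_le_one
    have key : μ (Iic t) ≤ ENNReal.ofReal (4*t^2) + ENNReal.ofReal (4*t) *
        (ENNReal.ofReal (4*(2*t)^2) + ENNReal.ofReal (4*(2*t)) *
          (ENNReal.ofReal (4*(4*t)^2) + ENNReal.ofReal (4*(4*t)) * 1)) := by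
      refine le_trans h1 ?_
      gcongr
      refine le_trans h2 ?_
      gcongr
      refine le_trans h3 ?_
      gcongr
    refine le_trans key ?_
    have c1 : ENNReal.ofReal (4*(4*t)^2) + ENNReal.ofReal (4*(4*t)) * 1
        = ENNReal.ofReal (4*(4*t)^2 + 4*(4*t)) := by
      rw [mul_one, ← ENNReal.ofReal_add (by positivity) (by positivity)]
    rw [c1, ← ENNReal.ofReal_mul (by positivity),
      ← ENNReal.ofReal_add (by positivity) (by positivity),
      ← ENNReal.ofReal_mul (by positivity),
      ← ENNReal.ofReal_add (by positivity) (by positivity)]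
    refine ENNReal.ofReal_le_ofReal ?_
    have a1 : t^3 ≤ (1/600)*t^2 := by nlinarith
    have a2 : t^4 ≤ (1/600)^2*t^2 := by nlinarith
    nlinarith
  · calc μ (Iic t) ≤ 1 := prob_le_one
    _ ≤ ENNReal.ofReal (360000 * t^2) := by
        rw [show (1:ℝ≥0∞) = ENNReal.ofReal 1 by simp]
        exact ENNReal.ofReal_le_ofReal (by nlinarith)

lemma zero_cover : Ioc (0:ℝ) 1 ⊆ ⋃ k : ℕ, Ioc ((1/2:ℝ)^(k+1)) ((1/2:ℝ)^k) := by
  intro x hx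
  obtain ⟨hx0, hx1⟩ := hx
  have hinv : 1 ≤ 1/x := by rw [le_div_iff₀ hx0]; linarith
  set m : ℕ := ⌊1/x⌋₊ with hm
  have hm1 : 1 ≤ m := Nat.one_le_iff_ne_zero.mpr (by
    intro h0
    have := Nat.floor_eq_zero.mp h0
    linarith)
  set k : ℕ := Nat.log 2 m with hk
  have h2k : (2:ℝ)^k ≤ 1/x := by
    have h1 : (2:ℕ)^k ≤ m := Nat.pow_log_le_self 2 (by omega)
    calc (2:ℝ)^k = ((2^k : ℕ) : ℝ) := by push_cast; ring
    _ ≤ (m:ℝ) := by exact_mod_cast h1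
    _ ≤ 1/x := Nat.floor_le (by linarith)
  have h2k1 : 1/x < (2:ℝ)^(k+1) := by
    have h1 : m < 2^(k+1) := Nat.lt_pow_succ_log_self (by norm_num) m
    have h2 : 1/x < (m:ℝ) + 1 := Nat.lt_floor_add_one _
    calc 1/x < (m:ℝ) + 1 := h2
    _ = ((m+1 : ℕ) : ℝ) := by push_cast; ring
    _ ≤ ((2^(k+1) : ℕ) : ℝ) := by exact_mod_cast h1
    _ = (2:ℝ)^(k+1) := by push_cast; ring
  have hpk : (0:ℝ) < 2^k := by positivity
  have hpk1 : (0:ℝ) < 2^(k+1) := by positivity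
  have hxa : x * (1/x) = 1 := by field_simp
  refine mem_iUnion.mpr ⟨k, ?_, ?_⟩
  · -- (1/2)^(k+1) < x
    have e : (1/2:ℝ)^(k+1) * 2^(k+1) = 1 := by
      rw [← mul_pow]; norm_num
    nlinarith
  · -- x ≤ (1/2)^k
    have e : (1/2:ℝ)^k * 2^k = 1 := by
      rw [← mul_pow]; norm_num
    nlinarith

lemma zero_integral (μ : Measure ℝ) (hμ : IsRDESolution μ) {p : ℝ} (hp : -2 < p)
    (hp0 : p ≤ 0) : ∫⁻ x in Ioc 0 1, ENNReal.ofReal (x ^ p) ∂μ < ⊤ := by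
  haveI := hμ.1
  set q : ℝ := (1/2:ℝ) ^ p with hq
  have hq1 : 1 ≤ q := Real.one_le_rpow_of_pos_of_le_one_of_nonpos (by norm_num) (by norm_num) hp0
  have hq4 : q < 4 := by
    have e : (1/2:ℝ) ^ p = (2:ℝ) ^ (-p) := by
      rw [Real.rpow_neg (by norm_num), ← Real.inv_rpow (by norm_num)]
      norm_num
    rw [hq, e]
    calc (2:ℝ) ^ (-p) < (2:ℝ) ^ (2:ℝ) := by
          refine Real.rpow_lt_rpow_of_exponent_lt (by norm_num) (by linarith)
    _ = 4 := by
          rw [show (2:ℝ) = ((2:ℕ):ℝ) by norm_num, Real.rpow_natCast]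
          norm_num
  have hterm : ∀ k : ℕ, ∫⁻ x in Ioc ((1/2:ℝ)^(k+1)) ((1/2:ℝ)^k), ENNReal.ofReal (x ^ p) ∂μ
      ≤ ENNReal.ofReal (360000 * q) * (ENNReal.ofReal (q/4))^k := by
    intro k
    have hb : (0:ℝ) < (1/2:ℝ)^(k+1) := by positivity
    have hck : ((1/2:ℝ)^(k+1) : ℝ) ^ p = q^(k+1) := by
      rw [← Real.rpow_natCast (1/2:ℝ) (k+1), ← Real.rpow_mul (by norm_num),
        mul_comm, Real.rpow_mul (by norm_num), ← hq, Real.rpow_natCast]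
    calc ∫⁻ x in Ioc ((1/2:ℝ)^(k+1)) ((1/2:ℝ)^k), ENNReal.ofReal (x ^ p) ∂μ
        ≤ ∫⁻ _ in Ioc ((1/2:ℝ)^(k+1)) ((1/2:ℝ)^k), ENNReal.ofReal (q^(k+1)) ∂μ := by
          refine setLIntegral_mono measurable_const fun x hx => ?_
          refine ENNReal.ofReal_le_ofReal ?_
          rw [← hck]
          exact Real.rpow_le_rpow_of_nonpos hb hx.1.le hp0
    _ = ENNReal.ofReal (q^(k+1)) * μ (Ioc ((1/2:ℝ)^(k+1)) ((1/2:ℝ)^k)) := setLIntegral_const _ _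
    _ ≤ ENNReal.ofReal (q^(k+1)) * ENNReal.ofReal (360000 * ((1/2:ℝ)^k)^2) := by
          refine mul_le_mul_right ?_ _
          refine le_trans (measure_mono Ioc_subset_Iic_self) (F_bound μ hμ (by positivity))
    _ = ENNReal.ofReal (360000 * q) * (ENNReal.ofReal (q/4))^k := by
          rw [← ENNReal.ofReal_mul (by positivity), ← ENNReal.ofReal_pow (by positivity),
            ← ENNReal.ofReal_mul (by positivity)]
          congr 1
          have e1 : ((1/2:ℝ)^k)^2 = (1/4:ℝ)^k := by
            rw [← pow_mul, mul_comm, pow_mul]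
            norm_num
          rw [e1]
          have e2 : (q/4:ℝ)^k = q^k * (1/4:ℝ)^k := by
            rw [← mul_pow]
            congr 1
            ring
          rw [e2, pow_succ]
          ring
  have hr : ENNReal.ofReal (q/4) < 1 := by
    rw [show (1:ℝ≥0∞) = ENNReal.ofReal 1 by simp]
    exact (ENNReal.ofReal_lt_ofReal_iff (by norm_num)).mpr (by linarith)
  calc ∫⁻ x in Ioc 0 1, ENNReal.ofReal (x ^ p) ∂μ
      ≤ ∫⁻ x in ⋃ k : ℕ, Ioc ((1/2:ℝ)^(k+1)) ((1/2:ℝ)^k), ENNReal.ofReal (x ^ p) ∂μ :=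
        lintegral_mono_set zero_cover
  _ ≤ ∑' k : ℕ, ∫⁻ x in Ioc ((1/2:ℝ)^(k+1)) ((1/2:ℝ)^k), ENNReal.ofReal (x ^ p) ∂μ :=
        lintegral_iUnion_le _ _
  _ ≤ ∑' k : ℕ, ENNReal.ofReal (360000 * q) * (ENNReal.ofReal (q/4))^k :=
        ENNReal.tsum_le_tsum hterm
  _ = ENNReal.ofReal (360000 * q) * ∑' k : ℕ, (ENNReal.ofReal (q/4))^k := ENNReal.tsum_mul_left
  _ < ⊤ := by
      refine ENNReal.mul_lt_top ENNReal.ofReal_lt_top ?_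
      rw [ENNReal.tsum_geometric]
      refine ENNReal.inv_lt_top.mpr ?_
      exact tsub_pos_of_lt hr

/-- The solution `X` of the RDE `X =_d √U·X + √U·(1 − √U)` has finite negative moments
`E[X^{−2+ε}] < ∞` for every `ε > 0`. -/
theorem rde_negative_moment (μ : Measure ℝ) (hμ : IsRDESolution μ)
    (ε : ℝ) (hε : 0 < ε) :
    ∫⁻ x, ENNReal.ofReal (x ^ (-2 + ε)) ∂ μ < ⊤ := by
  haveI := hμ.1
  set p : ℝ := -2 + ε with hp
  set f : ℝ → ℝ≥0∞ := fun x => ENNReal.ofReal (x ^ p) with hf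
  have huniv : (univ : Set ℝ) = Iio 0 ∪ ({0} ∪ (Ioc 0 1 ∪ Ioi 1)) := by
    ext x
    simp only [mem_univ, mem_union, mem_Iio, mem_singleton_iff, mem_Ioc, mem_Ioi, true_iff]
    rcases lt_trichotomy x 0 with h | h | h
    · exact Or.inl h
    · exact Or.inr (Or.inl h)
    · rcases le_or_gt x 1 with h1 | h1
      · exact Or.inr (Or.inr (Or.inl ⟨h, h1⟩))
      · exact Or.inr (Or.inr (Or.inr h1))
  have hsplit : ∫⁻ x, f x ∂μ ≤ (∫⁻ x in Iio 0, f x ∂μ)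
      + ((∫⁻ x in {0}, f x ∂μ) + ((∫⁻ x in Ioc 0 1, f x ∂μ) + ∫⁻ x in Ioi 1, f x ∂μ)) := by
    calc ∫⁻ x, f x ∂μ = ∫⁻ x in univ, f x ∂μ := (setLIntegral_univ f).symm
    _ = ∫⁻ x in Iio 0 ∪ ({0} ∪ (Ioc 0 1 ∪ Ioi 1)), f x ∂μ := by rw [← huniv]
    _ ≤ (∫⁻ x in Iio 0, f x ∂μ) + ∫⁻ x in {0} ∪ (Ioc 0 1 ∪ Ioi 1), f x ∂μ :=
        lintegral_union_le _ _ _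
    _ ≤ (∫⁻ x in Iio 0, f x ∂μ)
        + ((∫⁻ x in {0}, f x ∂μ) + ∫⁻ x in Ioc 0 1 ∪ Ioi 1, f x ∂μ) := by
        gcongr
        exact lintegral_union_le _ _ _
    _ ≤ _ := by
        gcongr
        exact lintegral_union_le _ _ _
  have h1 : ∫⁻ x in Iio 0, f x ∂μ = 0 := setLIntegral_measure_zero _ _ (mu_Iio_zero μ hμ)
  have h2 : ∫⁻ x in {0}, f x ∂μ ≤ 1 := by
    have hb : ∫⁻ x in ({0}:Set ℝ), f x ∂μ ≤ ∫⁻ _ in ({0}:Set ℝ), (1:ℝ≥0∞) ∂μ := by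
      refine setLIntegral_mono measurable_const fun x hx => ?_
      rw [mem_singleton_iff] at hx
      subst hx
      rw [hf]
      simp only
      rcases eq_or_ne p 0 with h | h
      · rw [h, Real.rpow_zero]; simp
      · rw [Real.zero_rpow h]; simp
    refine le_trans hb ?_
    rw [setLIntegral_const, one_mul]
    exact prob_le_one
  have h3 : ∫⁻ x in Ioc 0 1, f x ∂μ < ⊤ := by
    rcases le_or_gt ε 2 with hc | hc
    · exact zero_integral μ hμ (by linarith) (by simp only [hp]; linarith)
    · have hb : ∫⁻ x in Ioc (0:ℝ) 1, f x ∂μ ≤ ∫⁻ _ in Ioc (0:ℝ) 1, (1:ℝ≥0∞) ∂μ := by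
        refine setLIntegral_mono measurable_const fun x hx => ?_
        rw [hf]
        refine le_trans (ENNReal.ofReal_le_ofReal
          (Real.rpow_le_one hx.1.le hx.2 (by simp only [hp]; linarith))) (by simp)
      refine lt_of_le_of_lt hb ?_
      rw [setLIntegral_const, one_mul]
      exact lt_of_le_of_lt prob_le_one (by norm_num)
  have h4 : ∫⁻ x in Ioi 1, f x ∂μ < ⊤ := by
    rcases le_or_gt ε 2 with hc | hc
    · have hb : ∫⁻ x in Ioi (1:ℝ), f x ∂μ ≤ ∫⁻ _ in Ioi (1:ℝ), (1:ℝ≥0∞) ∂μ := by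
        refine setLIntegral_mono measurable_const fun x hx => ?_
        rw [hf]
        refine le_trans (ENNReal.ofReal_le_ofReal
          (Real.rpow_le_one_of_one_le_of_nonpos (le_of_lt hx) (by simp only [hp]; linarith))) (by simp)
      refine lt_of_le_of_lt hb ?_
      rw [setLIntegral_const, one_mul]
      exact lt_of_le_of_lt prob_le_one (by norm_num)
    · exact tail_integral μ hμ (by simp only [hp]; linarith)
  refine lt_of_le_of_lt hsplit ?_
  rw [h1, zero_add]
  refine ENNReal.add_lt_top.mpr ⟨lt_of_le_of_lt h2 (by norm_num), ?_⟩
  exact ENNReal.add_lt_top.mpr ⟨h3, h4⟩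
end
end
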